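/- arXiv:2601.12572 — 5 statements merged into one kernel-verified Lean document; each statement's English description precedes it below -/
import Mathlib

section
/- For γ ≥ 0 and θ ∈ ℝ, the function φ(t) = t^θ (1+|log t|)^γ is a Boyd function whose lower and upper Boyd indices both equal θ. -/
/-!
For `γ ≥ 0` the function `φ(t) = t^θ (1 + |log t|)^γ` is submultiplicative, because
`1 + |a + b| ≤ (1 + |a|)(1 + |b|)`; together with `φ(1) = 1` this makes the supremum defining `φ̄(t)`
attained at `s = 1`, so `φ̄ = φ`. Hence `log φ̄(t) / log t = θ + γ log(1 + |log t|) / log t`, whose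
correction term has the sign of `log t` and tends to `0` as `t → 0⁺` and as `t → ∞`. So `θ` is the
supremum over `t < 1` and the infimum over `t > 1`.
-/

open Real Set MeasureTheory
open scoped ENNReal

noncomputable def boydBar (φ : ℝ → ℝ) (t : ℝ) : ℝ :=
  sSup {x : ℝ | ∃ s : ℝ, 0 < s ∧ x = φ (t * s) / φ s}

structure IsBoyd (φ : ℝ → ℝ) : Prop where
  pos : ∀ t : ℝ, 0 < t → 0 < φ t
  one : φ 1 = 1
  cont : ContinuousOn φ (Set.Ioi 0)
  fin : ∀ t : ℝ, 0 < t → BddAbove {x : ℝ | ∃ s : ℝ, 0 < s ∧ x = φ (t * s) / φ s}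

noncomputable def lowerBoydIndex (φ : ℝ → ℝ) : ℝ :=
  sSup {x : ℝ | ∃ t ∈ Set.Ioo (0:ℝ) 1, x = Real.log (boydBar φ t) / Real.log t}

noncomputable def upperBoydIndex (φ : ℝ → ℝ) : ℝ :=
  sInf {x : ℝ | ∃ t ∈ Set.Ioi (1:ℝ), x = Real.log (boydBar φ t) / Real.log t}

open Filter Topology Asymptotics

section Boyd

variable {φ : ℝ → ℝ}

theorem isGreatest_boydRatios_of_submultiplicative (hpos : ∀ s, 0 < s → 0 < φ s) (hone : φ 1 = 1)
    {t : ℝ} (hmul : ∀ s, 0 < s → φ (t * s) ≤ φ t * φ s) :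
    IsGreatest {x : ℝ | ∃ s : ℝ, 0 < s ∧ x = φ (t * s) / φ s} (φ t) := by
  refine ⟨⟨1, one_pos, by rw [mul_one, hone, div_one]⟩, ?_⟩
  rintro _ ⟨s, hs, rfl⟩
  exact (div_le_iff₀ (hpos s hs)).2 (hmul s hs)

theorem lowerBoydIndex_eq_of_le_of_tendsto {b : ℝ}
    (hle : ∀ t ∈ Ioo (0 : ℝ) 1, log (boydBar φ t) / log t ≤ b)
    (hlim : Tendsto (fun t => log (boydBar φ t) / log t) (𝓝[>] 0) (𝓝 b)) :
    lowerBoydIndex φ = b := by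
  have hlub : IsLUB {x : ℝ | ∃ t ∈ Ioo (0 : ℝ) 1, x = log (boydBar φ t) / log t} b := by
    refine isLUB_of_mem_closure ?_ (mem_closure_of_tendsto hlim ?_)
    · rintro _ ⟨t, ht, rfl⟩
      exact hle t ht
    · filter_upwards [Ioo_mem_nhdsGT one_pos] with t ht using ⟨t, ht, rfl⟩
  exact hlub.csSup_eq hlub.nonempty

theorem upperBoydIndex_eq_of_le_of_tendsto {b : ℝ}
    (hle : ∀ t ∈ Ioi (1 : ℝ), b ≤ log (boydBar φ t) / log t)
    (hlim : Tendsto (fun t => log (boydBar φ t) / log t) atTop (𝓝 b)) :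
    upperBoydIndex φ = b := by
  have hglb : IsGLB {x : ℝ | ∃ t ∈ Ioi (1 : ℝ), x = log (boydBar φ t) / log t} b := by
    refine isGLB_of_mem_closure ?_ (mem_closure_of_tendsto hlim ?_)
    · rintro _ ⟨t, ht, rfl⟩
      exact hle t ht
    · filter_upwards [eventually_gt_atTop 1] with t ht using ⟨t, ht, rfl⟩
  exact hglb.csInf_eq hglb.nonempty

end Boyd

theorem one_add_abs_log_mul_le {t s : ℝ} (ht : t ≠ 0) (hs : s ≠ 0) :
    1 + |log (t * s)| ≤ (1 + |log t|) * (1 + |log s|) := by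
  rw [log_mul ht hs]
  nlinarith [abs_add_le (log t) (log s), abs_nonneg (log t), abs_nonneg (log s)]

theorem log_one_add_abs_nonneg (x : ℝ) : 0 ≤ log (1 + |x|) :=
  log_nonneg (le_add_of_nonneg_right (abs_nonneg x))

theorem tendsto_log_one_add_abs_div_cocompact :
    Tendsto (fun x : ℝ => log (1 + |x|) / x) (cocompact ℝ) (𝓝 0) := by
  have habs : Tendsto (fun x : ℝ => |x|) (cocompact ℝ) atTop :=
    tendsto_norm_cocompact_atTop.congr norm_eq_abs
  have hone_add : Tendsto (fun x : ℝ => 1 + |x|) (cocompact ℝ) atTop :=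
    tendsto_atTop_add_const_left _ 1 habs
  have hlog : (fun x : ℝ => log (1 + |x|)) =o[cocompact ℝ] (fun x => 1 + |x|) :=
    isLittleO_log_id_atTop.comp_tendsto hone_add
  have hlin : (fun x : ℝ => 1 + |x|) =O[cocompact ℝ] id := by
    refine IsBigO.of_bound 2 ?_
    filter_upwards [habs.eventually_ge_atTop 1] with x hx
    rw [norm_of_nonneg (by positivity), id, norm_eq_abs]
    linarith
  exact (hlog.trans_isBigO hlin).tendsto_div_nhds_zero

theorem tendsto_add_mul_log_one_add_abs_log_div_log (θ γ : ℝ) {l : Filter ℝ}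
    (hl : Tendsto log l (cocompact ℝ)) :
    Tendsto (fun t => θ + γ * (log (1 + |log t|) / log t)) l (𝓝 θ) := by
  simpa using ((tendsto_log_one_add_abs_div_cocompact.comp hl).const_mul γ).const_add θ

noncomputable def powerLog (θ γ t : ℝ) : ℝ := t ^ θ * (1 + |log t|) ^ γ

namespace powerLog

variable {θ γ t : ℝ}

theorem pos (ht : 0 < t) : 0 < powerLog θ γ t := by
  unfold powerLog
  positivity

theorem apply_one : powerLog θ γ 1 = 1 := by
  simp [powerLog]

theorem continuousOn : ContinuousOn (powerLog θ γ) (Ioi 0) := by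
  intro x hx
  have hx0 : x ≠ 0 := ne_of_gt hx
  have hbase : 1 + |log x| ≠ 0 := by positivity
  apply ContinuousAt.continuousWithinAt
  unfold powerLog
  exact (continuousAt_id.rpow_const (Or.inl hx0)).mul
    ((continuousAt_const.add (continuousAt_log hx0).abs).rpow_const (Or.inl hbase))

theorem mul_le (hγ : 0 ≤ γ) {s : ℝ} (ht : 0 < t) (hs : 0 < s) :
    powerLog θ γ (t * s) ≤ powerLog θ γ t * powerLog θ γ s := by
  unfold powerLog
  calc (t * s) ^ θ * (1 + |log (t * s)|) ^ γ
      ≤ (t * s) ^ θ * ((1 + |log t|) * (1 + |log s|)) ^ γ := by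
        gcongr
        exact one_add_abs_log_mul_le ht.ne' hs.ne'
    _ = t ^ θ * (1 + |log t|) ^ γ * (s ^ θ * (1 + |log s|) ^ γ) := by
        rw [mul_rpow ht.le hs.le, mul_rpow (by positivity) (by positivity)]
        ring

theorem isGreatest_boydRatios (hγ : 0 ≤ γ) (ht : 0 < t) :
    IsGreatest {x : ℝ | ∃ s : ℝ, 0 < s ∧ x = powerLog θ γ (t * s) / powerLog θ γ s}
      (powerLog θ γ t) :=
  isGreatest_boydRatios_of_submultiplicative (fun _ => pos) apply_one (fun _ => mul_le hγ ht)

theorem isBoyd (hγ : 0 ≤ γ) : IsBoyd (powerLog θ γ) :=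
  ⟨fun _ => pos, apply_one, continuousOn,
    fun _ ht => (isGreatest_boydRatios hγ ht).bddAbove⟩

theorem log_boydBar_div_log (hγ : 0 ≤ γ) (ht : 0 < t) (ht1 : t ≠ 1) :
    log (boydBar (powerLog θ γ) t) / log t = θ + γ * (log (1 + |log t|) / log t) := by
  have hlog : log t ≠ 0 := log_ne_zero_of_pos_of_ne_one ht ht1
  rw [boydBar, (isGreatest_boydRatios hγ ht).csSup_eq, powerLog,
    log_mul (by positivity) (by positivity), log_rpow ht, log_rpow (by positivity)]
  field_simp

theorem lowerBoydIndex_eq (hγ : 0 ≤ γ) : lowerBoydIndex (powerLog θ γ) = θ := by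
  refine lowerBoydIndex_eq_of_le_of_tendsto (fun t ht => ?_) ?_
  · rw [log_boydBar_div_log hγ ht.1 ht.2.ne]
    exact add_le_of_nonpos_right (mul_nonpos_of_nonneg_of_nonpos hγ
      (div_nonpos_of_nonneg_of_nonpos (log_one_add_abs_nonneg _) (log_neg ht.1 ht.2).le))
  · refine (tendsto_add_mul_log_one_add_abs_log_div_log θ γ
      (tendsto_log_nhdsGT_zero.mono_right atBot_le_cocompact)).congr' ?_
    filter_upwards [Ioo_mem_nhdsGT one_pos] with t ht
    rw [log_boydBar_div_log hγ ht.1 ht.2.ne]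

theorem upperBoydIndex_eq (hγ : 0 ≤ γ) : upperBoydIndex (powerLog θ γ) = θ := by
  refine upperBoydIndex_eq_of_le_of_tendsto (fun t ht => ?_) ?_
  · rw [log_boydBar_div_log hγ (one_pos.trans ht) ht.ne']
    exact le_add_of_nonneg_right
      (mul_nonneg hγ (div_nonneg (log_one_add_abs_nonneg _) (log_pos ht).le))
  · refine (tendsto_add_mul_log_one_add_abs_log_div_log θ γ
      (tendsto_log_atTop.mono_right atTop_le_cocompact)).congr' ?_
    filter_upwards [eventually_gt_atTop 1] with t ht
    rw [log_boydBar_div_log hγ (one_pos.trans ht) ht.ne']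

end powerLog

theorem power_log_is_boyd (γ θ : ℝ) (hγ : 0 ≤ γ) :
    IsBoyd (fun t : ℝ => t ^ θ * (1 + |Real.log t|) ^ γ) ∧
      lowerBoydIndex (fun t : ℝ => t ^ θ * (1 + |Real.log t|) ^ γ) = θ ∧
      upperBoydIndex (fun t : ℝ => t ^ θ * (1 + |Real.log t|) ^ γ) = θ :=
  ⟨powerLog.isBoyd hγ, powerLog.lowerBoydIndex_eq hγ, powerLog.upperBoydIndex_eq hγ⟩
end

section
/- For a Boyd function φ, the lower Boyd index b̲(φ) is positive if and only if lim_{t→0⁺} φ̄(t) = 0, and this holds if and only if φ̄ is integrable on (0,1) with respect to dt/t. -/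
open Real Set MeasureTheory
open scoped ENNReal

namespace BoydAux

variable {φ : ℝ → ℝ}

def S (φ : ℝ → ℝ) (t : ℝ) : Set ℝ := {x : ℝ | ∃ s : ℝ, 0 < s ∧ x = φ (t * s) / φ s}

lemma mem_S (t s : ℝ) (hs : 0 < s) : φ (t * s) / φ s ∈ S φ t := ⟨s, hs, rfl⟩

lemma S_nonempty (t : ℝ) : (S φ t).Nonempty := ⟨_, mem_S t 1 one_pos⟩

lemma boydBar_eq (t : ℝ) : boydBar φ t = sSup (S φ t) := rfl

lemma phi_le_B (hφ : IsBoyd φ) {t : ℝ} (ht : 0 < t) : φ t ≤ boydBar φ t := by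
  have h := le_csSup (hφ.fin t ht) (mem_S (φ := φ) t 1 one_pos)
  rw [boydBar_eq]
  simp only [hφ.one, mul_one, div_one] at h; exact h

lemma B_pos (hφ : IsBoyd φ) {t : ℝ} (ht : 0 < t) : 0 < boydBar φ t :=
  lt_of_lt_of_le (hφ.pos t ht) (phi_le_B hφ ht)

lemma B_one (hφ : IsBoyd φ) : boydBar φ 1 = 1 := by
  rw [boydBar_eq]
  have hS : S φ 1 = {1} := by
    ext x
    constructor
    · rintro ⟨s, hs, rfl⟩
      simp [one_mul, div_self (hφ.pos s hs).ne']
    · rintro rfl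
      exact ⟨1, one_pos, by simp [hφ.one]⟩
  rw [hS, csSup_singleton]

lemma B_submul (hφ : IsBoyd φ) {t u : ℝ} (ht : 0 < t) (hu : 0 < u) :
    boydBar φ (t * u) ≤ boydBar φ t * boydBar φ u := by
  rw [boydBar_eq]
  refine csSup_le (S_nonempty _) ?_
  rintro x ⟨s, hs, rfl⟩
  have hus : 0 < u * s := mul_pos hu hs
  have h1 : φ (t * (u * s)) / φ (u * s) ≤ boydBar φ t :=
    le_csSup (hφ.fin t ht) (mem_S t (u * s) hus)
  have h2 : φ (u * s) / φ s ≤ boydBar φ u := le_csSup (hφ.fin u hu) (mem_S u s hs)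
  have hsp := hφ.pos s hs
  have husp := hφ.pos (u * s) hus
  have key : φ (t * u * s) / φ s = φ (t * (u * s)) / φ (u * s) * (φ (u * s) / φ s) := by
    rw [mul_assoc]
    field_simp
  rw [key]
  exact mul_le_mul h1 h2 (by positivity) (B_pos hφ ht).le

lemma B_pow_le (hφ : IsBoyd φ) {t : ℝ} (ht : 0 < t) :
    ∀ m : ℕ, boydBar φ (t ^ m) ≤ boydBar φ t ^ m := by
  intro m
  induction m with
  | zero => simp [B_one hφ]
  | succ m ih =>
      have h1 : boydBar φ (t ^ m * t) ≤ boydBar φ (t ^ m) * boydBar φ t :=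
        B_submul hφ (pow_pos ht m) ht
      calc boydBar φ (t ^ (m + 1)) = boydBar φ (t ^ m * t) := by rw [pow_succ]
        _ ≤ boydBar φ (t ^ m) * boydBar φ t := h1
        _ ≤ boydBar φ t ^ m * boydBar φ t :=
            mul_le_mul_of_nonneg_right ih (B_pos hφ ht).le
        _ = boydBar φ t ^ (m + 1) := (pow_succ _ _).symm

/-- The log-scale version of `boydBar`. -/
noncomputable def g (φ : ℝ → ℝ) : ℝ → ℝ := fun x => Real.log (boydBar φ (Real.exp x))

lemma g_zero (hφ : IsBoyd φ) : g φ 0 = 0 := by simp [g, B_one hφ]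

lemma g_log (hφ : IsBoyd φ) {t : ℝ} (ht : 0 < t) : g φ (Real.log t) = Real.log (boydBar φ t) := by
  rw [g, Real.exp_log ht]

lemma B_eq_exp_g (hφ : IsBoyd φ) {t : ℝ} (ht : 0 < t) :
    boydBar φ t = Real.exp (g φ (Real.log t)) := by
  rw [g_log hφ ht, Real.exp_log (B_pos hφ ht)]

lemma g_subadd (hφ : IsBoyd φ) (x y : ℝ) : g φ (x + y) ≤ g φ x + g φ y := by
  have h : boydBar φ (Real.exp x * Real.exp y) ≤ boydBar φ (Real.exp x) * boydBar φ (Real.exp y) :=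
    B_submul hφ (Real.exp_pos x) (Real.exp_pos y)
  have h2 : Real.log (boydBar φ (Real.exp (x + y))) ≤
      Real.log (boydBar φ (Real.exp x) * boydBar φ (Real.exp y)) := by
    rw [Real.exp_add]
    exact Real.log_le_log (B_pos hφ (by positivity)) h
  calc g φ (x + y) ≤ Real.log (boydBar φ (Real.exp x) * boydBar φ (Real.exp y)) := h2
    _ = g φ x + g φ y := Real.log_mul (B_pos hφ (Real.exp_pos x)).ne' (B_pos hφ (Real.exp_pos y)).ne'

lemma g_nsmul (hφ : IsBoyd φ) (x : ℝ) : ∀ n : ℕ, g φ (n * x) ≤ n * g φ x := by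
  intro n
  induction n with
  | zero => simp [g_zero hφ]
  | succ n ih =>
      push_cast
      calc g φ ((n + 1 : ℝ) * x) = g φ (n * x + x) := by ring_nf
        _ ≤ g φ (n * x) + g φ x := g_subadd hφ _ _
        _ ≤ n * g φ x + g φ x := by linarith
        _ = (n + 1 : ℝ) * g φ x := by ring

lemma g_neg_add (hφ : IsBoyd φ) (x : ℝ) : 0 ≤ g φ x + g φ (-x) := by
  have := g_subadd hφ x (-x)
  rw [add_neg_cancel, g_zero hφ] at this
  linarith




lemma g_lsc (hφ : IsBoyd φ) : LowerSemicontinuous (g φ) := by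
  rw [lowerSemicontinuous_iff_isOpen_preimage]
  intro a
  have hset : g φ ⁻¹' Ioi a = ⋃ s : {s : ℝ // 0 < s},
      {x : ℝ | Real.exp a < φ (Real.exp x * (s : ℝ)) / φ (s : ℝ)} := by
    ext x
    simp only [mem_preimage, mem_Ioi, mem_iUnion, mem_setOf_eq]
    constructor
    · intro hx
      have hx' : Real.exp a < boydBar φ (Real.exp x) := by
        rw [← Real.exp_log (B_pos hφ (Real.exp_pos x))]
        exact Real.exp_lt_exp.2 hx
      rw [boydBar_eq] at hx'
      obtain ⟨y, ⟨s, hs, rfl⟩, hy⟩ := (lt_csSup_iff (hφ.fin _ (Real.exp_pos x))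
        (S_nonempty _)).1 hx'
      exact ⟨⟨s, hs⟩, hy⟩
    · rintro ⟨⟨s, hs⟩, hx⟩
      have hle : φ (Real.exp x * s) / φ s ≤ boydBar φ (Real.exp x) := by
        rw [boydBar_eq]; exact le_csSup (hφ.fin _ (Real.exp_pos x)) (mem_S _ s hs)
      have : Real.exp a < boydBar φ (Real.exp x) := lt_of_lt_of_le hx hle
      calc a = Real.log (Real.exp a) := (Real.log_exp a).symm
        _ < Real.log (boydBar φ (Real.exp x)) :=
          Real.log_lt_log (Real.exp_pos a) this
  rw [hset]
  refine isOpen_iUnion fun s => ?_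
  have hcont : Continuous fun x : ℝ => φ (Real.exp x * (s : ℝ)) / φ (s : ℝ) := by
    have h1 : Continuous fun x : ℝ => φ (Real.exp x * (s : ℝ)) := by
      refine hφ.cont.comp_continuous (Real.continuous_exp.mul continuous_const) fun x => ?_
      exact mem_Ioi.2 (mul_pos (Real.exp_pos x) s.2)
    exact h1.div_const _
  exact isOpen_lt continuous_const hcont

/-- local boundedness of `g` from Baire category. -/
lemma g_bdd (hφ : IsBoyd φ) (R : ℝ) : ∃ C : ℝ, 0 ≤ C ∧ ∀ x : ℝ, |x| ≤ R → g φ x ≤ C := by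
  -- Baire: some sublevel set has interior
  have hcl : ∀ n : ℕ, IsClosed {x : ℝ | g φ x ≤ (n : ℝ)} := by
    intro n
    have : {x : ℝ | g φ x ≤ (n : ℝ)} = (g φ ⁻¹' Ioi (n : ℝ))ᶜ := by
      ext x; simp [not_lt]
    rw [this]
    exact (lowerSemicontinuous_iff_isOpen_preimage.1 (g_lsc hφ) _).isClosed_compl
  have hun : (⋃ n : ℕ, {x : ℝ | g φ x ≤ (n : ℝ)}) = univ := by
    ext x
    simp only [mem_iUnion, mem_setOf_eq, mem_univ, iff_true]
    exact exists_nat_ge (g φ x)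
  obtain ⟨N, hN⟩ := nonempty_interior_of_iUnion_of_closed hcl hun
  obtain ⟨u, hu⟩ := hN
  obtain ⟨ε, hε, hball⟩ := Metric.mem_nhds_iff.1 (mem_interior_iff_mem_nhds.1 hu)
  have hball' : ∀ z : ℝ, |z - u| < ε → g φ z ≤ (N : ℝ) :=
    fun z hz => hball (by simpa [Metric.mem_ball, Real.dist_eq] using hz)
  -- covering [-R, R]
  refine ⟨max 0 ((N : ℝ) + 2 * R / ε * max (g φ ε) 0 + g φ (-u - R)), le_max_left _ _,
    fun x hx => ?_⟩
  have hR : 0 ≤ R := le_trans (abs_nonneg x) hx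
  have hx1 : -R ≤ x := neg_le_of_abs_le hx
  have hx2 : x ≤ R := le_of_abs_le hx
  set x' : ℝ := x + R with hx'def
  have hx'0 : 0 ≤ x' := by linarith
  have hx'2R : x' ≤ 2 * R := by linarith
  set j : ℕ := ⌊x' / ε⌋₊ with hjdef
  have hj1 : (j : ℝ) ≤ x' / ε := Nat.floor_le (div_nonneg hx'0 hε.le)
  have hj2 : x' / ε < j + 1 := Nat.lt_floor_add_one _
  have hjε1 : (j : ℝ) * ε ≤ x' := by
    calc (j : ℝ) * ε ≤ x' / ε * ε := mul_le_mul_of_nonneg_right hj1 hε.le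
      _ = x' := div_mul_cancel₀ _ hε.ne'
  have hjε2 : x' < ((j : ℝ) + 1) * ε := by
    calc x' = x' / ε * ε := (div_mul_cancel₀ _ hε.ne').symm
      _ < ((j : ℝ) + 1) * ε := mul_lt_mul_of_pos_right hj2 hε
  -- decompose x = a + c, a close to u
  set a : ℝ := u + (x' - j * ε) with hadef
  set c : ℝ := (j : ℝ) * ε + (-u - R) with hcdef
  have hac : x = a + c := by rw [hadef, hcdef, hx'def]; ring
  have ha : g φ a ≤ (N : ℝ) := by
    refine hball' a ?_
    have h1 : a - u = x' - j * ε := by rw [hadef]; ring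
    rw [h1, abs_of_nonneg (by linarith)]
    linarith
  have hc1 : g φ c ≤ g φ ((j : ℝ) * ε) + g φ (-u - R) := g_subadd hφ _ _
  have hc2 : g φ ((j : ℝ) * ε) ≤ (j : ℝ) * g φ ε := g_nsmul hφ ε j
  have hc3 : (j : ℝ) * g φ ε ≤ 2 * R / ε * max (g φ ε) 0 := by
    rcases le_or_gt (g φ ε) 0 with h | h
    · have : (j : ℝ) * g φ ε ≤ 0 := mul_nonpos_of_nonneg_of_nonpos (Nat.cast_nonneg j) h
      exact this.trans (by positivity)
    · have hjle : (j : ℝ) ≤ 2 * R / ε := by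
        calc (j : ℝ) ≤ x' / ε := hj1
          _ ≤ 2 * R / ε := by gcongr
      calc (j : ℝ) * g φ ε ≤ 2 * R / ε * g φ ε := mul_le_mul_of_nonneg_right hjle h.le
        _ ≤ 2 * R / ε * max (g φ ε) 0 := by
            apply mul_le_mul_of_nonneg_left (le_max_left _ _)
            positivity
  have := g_subadd hφ a c
  rw [← hac] at this
  have : g φ x ≤ (N : ℝ) + 2 * R / ε * max (g φ ε) 0 + g φ (-u - R) := by linarith
  exact this.trans (le_max_right _ _)

/-- `-g(-x) ≤ C₂ * x` for all `x > 0`, where `C₂` bounds `g` on `[-2,2]`. -/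
lemma neg_g_neg_le (hφ : IsBoyd φ) {C₂ : ℝ} (hC₂0 : 0 ≤ C₂)
    (hC₂ : ∀ x : ℝ, |x| ≤ 2 → g φ x ≤ C₂) {x : ℝ} (hx : 0 < x) :
    -g φ (-x) ≤ C₂ * x := by
  rcases le_or_gt 1 x with h1 | h1
  · -- x ≥ 1 : use -g(-x) ≤ g x ≤ n * g(x/n) with x/n ∈ [1,2]
    set n : ℕ := ⌊x⌋₊ with hn
    have hn1 : 1 ≤ n := Nat.one_le_iff_ne_zero.2 (by
      intro h0
      have := Nat.floor_eq_zero.1 h0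
      linarith)
    have hnx : (n : ℝ) ≤ x := Nat.floor_le hx.le
    have hxn : x < n + 1 := Nat.lt_floor_add_one x
    have hnpos : (0:ℝ) < n := by exact_mod_cast hn1
    set y : ℝ := x / n with hy
    have hy1 : 1 ≤ y := (le_div_iff₀ hnpos).2 (by linarith)
    have hy2 : y ≤ 2 := by
      rw [hy, div_le_iff₀ hnpos]
      have : (1:ℝ) ≤ n := by exact_mod_cast hn1
      linarith
    have hgy : g φ y ≤ C₂ := hC₂ y (by rw [abs_of_nonneg (by linarith)]; linarith)
    have hxny : x = n * y := by rw [hy]; field_simp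
    have hgx : g φ x ≤ n * g φ y := by rw [hxny]; exact g_nsmul hφ y n
    have h2 : -g φ (-x) ≤ g φ x := by have := g_neg_add hφ x; linarith
    calc -g φ (-x) ≤ g φ x := h2
      _ ≤ n * g φ y := hgx
      _ ≤ n * C₂ := mul_le_mul_of_nonneg_left hgy hnpos.le
      _ ≤ x * C₂ := mul_le_mul_of_nonneg_right hnx hC₂0
      _ = C₂ * x := mul_comm _ _
  · -- 0 < x < 1 : superadditivity of -g(-·)
    set n : ℕ := ⌈1 / x⌉₊ with hn
    have hnge : 1 / x ≤ n := Nat.le_ceil _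
    have hnlt : (n : ℝ) < 1 / x + 1 := Nat.ceil_lt_add_one (by positivity)
    have hz1 : 1 ≤ n * x := by
      calc (1:ℝ) = 1 / x * x := by field_simp
        _ ≤ n * x := mul_le_mul_of_nonneg_right hnge hx.le
    have hz2 : (n : ℝ) * x ≤ 2 := by
      have : (n : ℝ) * x < (1 / x + 1) * x := mul_lt_mul_of_pos_right hnlt hx
      have h' : (1 / x + 1) * x = 1 + x := by field_simp
      nlinarith
    have hgnx : g φ ((n : ℝ) * (-x)) ≤ n * g φ (-x) := g_nsmul hφ (-x) n
    have hrw : (n : ℝ) * (-x) = -((n : ℝ) * x) := by ring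
    rw [hrw] at hgnx
    -- so n * (-g φ (-x)) ≤ -g φ (-(n*x)) ≤ g φ (n*x) ≤ C₂
    have h3 : -g φ (-((n:ℝ) * x)) ≤ g φ ((n:ℝ) * x) := by
      have := g_neg_add hφ ((n:ℝ) * x); linarith
    have h4 : g φ ((n:ℝ) * x) ≤ C₂ := hC₂ _ (by rw [abs_of_nonneg (by linarith)]; linarith)
    have h5 : (n:ℝ) * (-g φ (-x)) ≤ C₂ := by linarith
    -- conclude: -g(-x) ≤ C₂ / n ≤ C₂ * x  since n * x ≥ 1
    have hnpos : (0:ℝ) < n := by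
      have : (1:ℝ) ≤ n * x := hz1
      nlinarith
    rcases le_or_gt (-g φ (-x)) 0 with h6 | h6
    · nlinarith
    · -- -g(-x) ≤ C₂/n and C₂/n ≤ C₂ x
      have h7 : -g φ (-x) ≤ C₂ / n := by rw [le_div_iff₀ hnpos]; linarith [h5]
      have h8 : C₂ / n ≤ C₂ * x := by
        rw [div_le_iff₀ hnpos]
        nlinarith
      linarith

lemma ratio_le (hφ : IsBoyd φ) : ∃ C₂ : ℝ, 0 ≤ C₂ ∧ ∀ t ∈ Ioo (0:ℝ) 1,
    Real.log (boydBar φ t) / Real.log t ≤ C₂ := by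
  obtain ⟨C₂, hC₂0, hC₂⟩ := g_bdd hφ 2
  refine ⟨C₂, hC₂0, fun t ht => ?_⟩
  have hlt : Real.log t < 0 := Real.log_neg ht.1 ht.2
  set x : ℝ := -Real.log t with hx
  have hxpos : 0 < x := by simp [hx]; linarith
  have hlog : Real.log (boydBar φ t) = g φ (-x) := by
    rw [hx, neg_neg, g_log hφ ht.1]
  rw [hlog]
  have key : -g φ (-x) ≤ C₂ * x := neg_g_neg_le hφ hC₂0 hC₂ hxpos
  rw [show Real.log t = -x by rw [hx]; ring]
  rw [div_le_iff_of_neg (by linarith : -x < 0)]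
  linarith

lemma ratio_bddAbove (hφ : IsBoyd φ) :
    BddAbove {x : ℝ | ∃ t ∈ Set.Ioo (0:ℝ) 1, x = Real.log (boydBar φ t) / Real.log t} := by
  obtain ⟨C₂, _, hC₂⟩ := ratio_le hφ
  exact ⟨C₂, by rintro x ⟨t, ht, rfl⟩; exact hC₂ t ht⟩

/-- Main quantitative bound from positivity of the lower Boyd index. -/
lemma main_bound (hφ : IsBoyd φ) (hP : 0 < lowerBoydIndex φ) :
    ∃ c : ℝ, 0 < c ∧ ∃ C : ℝ, 0 < C ∧ ∀ t ∈ Ioo (0:ℝ) 1, boydBar φ t ≤ C * t ^ c := by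
  -- extract an element of the ratio set which is positive
  have hex : ∃ t₀ ∈ Ioo (0:ℝ) 1, 0 < Real.log (boydBar φ t₀) / Real.log t₀ := by
    by_contra hcon
    push_neg at hcon
    have : lowerBoydIndex φ ≤ 0 := by
      apply Real.sSup_nonpos
      rintro x ⟨t, ht, rfl⟩
      exact hcon t ht
    linarith
  obtain ⟨t₀, ht₀, hr₀⟩ := hex
  set r₀ : ℝ := Real.log (boydBar φ t₀) / Real.log t₀ with hr₀def
  have hlt₀ : Real.log t₀ < 0 := Real.log_neg ht₀.1 ht₀.2
  set X : ℝ := -Real.log t₀ with hX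
  have hXpos : 0 < X := by simp [hX]; linarith
  -- B t₀ = t₀ ^ r₀
  have hBt₀ : boydBar φ t₀ = t₀ ^ r₀ := by
    rw [Real.rpow_def_of_pos ht₀.1, mul_comm, hr₀def, div_mul_cancel₀ _ hlt₀.ne,
      Real.exp_log (B_pos hφ ht₀.1)]
  obtain ⟨C₁, hC₁0, hC₁⟩ := g_bdd hφ X
  refine ⟨r₀, hr₀, Real.exp C₁ / t₀ ^ r₀, div_pos (Real.exp_pos _) (Real.rpow_pos_of_pos ht₀.1 _), fun t ht => ?_⟩
  have hlt : Real.log t < 0 := Real.log_neg ht.1 ht.2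
  set y : ℝ := -Real.log t with hy
  have hypos : 0 < y := by simp [hy]; linarith
  set m : ℕ := ⌊y / X⌋₊ with hm
  have hm1 : (m : ℝ) * X ≤ y := by
    have h := Nat.floor_le (div_nonneg hypos.le hXpos.le)
    calc (m : ℝ) * X ≤ y / X * X := mul_le_mul_of_nonneg_right h hXpos.le
      _ = y := div_mul_cancel₀ _ hXpos.ne'
  have hm2 : y < ((m : ℝ) + 1) * X := by
    have h := Nat.lt_floor_add_one (y / X)
    calc y = y / X * X := (div_mul_cancel₀ _ hXpos.ne').symm
      _ < ((m : ℝ) + 1) * X := mul_lt_mul_of_pos_right h hXpos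
  have ht₀m : (0:ℝ) < t₀ ^ m := pow_pos ht₀.1 m
  set u : ℝ := t / t₀ ^ m with hu
  have hupos : 0 < u := div_pos ht.1 ht₀m
  have hlogu : Real.log u = (m : ℝ) * X - y := by
    rw [hu, Real.log_div ht.1.ne' ht₀m.ne', Real.log_pow]
    rw [hy, hX]; ring
  have habs : |Real.log u| ≤ X := by
    rw [hlogu, abs_le]
    constructor <;> nlinarith
  have hBu : boydBar φ u ≤ Real.exp C₁ := by
    rw [B_eq_exp_g hφ hupos]
    exact Real.exp_le_exp.2 (hC₁ _ habs)
  have htdecomp : t = t₀ ^ m * u := by rw [hu]; field_simp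
  have hB1 : boydBar φ t ≤ boydBar φ (t₀ ^ m) * boydBar φ u := by
    rw [htdecomp]; exact B_submul hφ ht₀m hupos
  have hB2 : boydBar φ (t₀ ^ m) ≤ boydBar φ t₀ ^ m := B_pow_le hφ ht₀.1 m
  -- (B t₀)^m = t₀ ^ (r₀ * m)
  have hq : boydBar φ t₀ ^ m = t₀ ^ (r₀ * m) := by
    rw [hBt₀, Real.rpow_mul ht₀.1.le, Real.rpow_natCast]
  -- t₀ ^ (r₀ * m) * t₀ ^ r₀ ≤ t ^ r₀
  have htgt : t₀ ^ (m + 1 : ℕ) < t := by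
    have h1 : Real.log (t₀ ^ (m + 1 : ℕ)) < Real.log t := by
      rw [Real.log_pow]
      push_cast
      rw [show Real.log t = -y by rw [hy]; ring, show Real.log t₀ = -X by rw [hX]; ring]
      nlinarith
    have := Real.exp_lt_exp.2 h1
    rwa [Real.exp_log (pow_pos ht₀.1 _), Real.exp_log ht.1] at this
  have hcmp : t₀ ^ (r₀ * m) * t₀ ^ r₀ ≤ t ^ r₀ := by
    have h1 : (t₀ ^ (m + 1 : ℕ) : ℝ) ^ r₀ ≤ t ^ r₀ :=
      Real.rpow_le_rpow (pow_nonneg ht₀.1.le _) htgt.le hr₀.le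
    calc t₀ ^ (r₀ * m) * t₀ ^ r₀ = t₀ ^ (r₀ * m + r₀) := (Real.rpow_add ht₀.1 _ _).symm
      _ = (t₀ ^ ((m:ℝ) + 1)) ^ r₀ := by
          rw [← Real.rpow_mul ht₀.1.le]
          ring_nf
      _ = (t₀ ^ (m + 1 : ℕ) : ℝ) ^ r₀ := by rw [← Real.rpow_natCast t₀ (m+1)]; push_cast; ring_nf
      _ ≤ t ^ r₀ := h1
  have ht₀r : (0:ℝ) < t₀ ^ r₀ := Real.rpow_pos_of_pos ht₀.1 _
  have hqle : t₀ ^ (r₀ * m) ≤ t ^ r₀ / t₀ ^ r₀ := by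
    rw [le_div_iff₀ ht₀r]; exact hcmp
  calc boydBar φ t ≤ boydBar φ (t₀ ^ m) * boydBar φ u := hB1
    _ ≤ boydBar φ t₀ ^ m * Real.exp C₁ :=
        mul_le_mul hB2 hBu (B_pos hφ hupos).le (pow_nonneg (B_pos hφ ht₀.1).le m)
    _ = t₀ ^ (r₀ * m) * Real.exp C₁ := by rw [hq]
    _ ≤ t ^ r₀ / t₀ ^ r₀ * Real.exp C₁ := mul_le_mul_of_nonneg_right hqle (Real.exp_pos _).le
    _ = Real.exp C₁ / t₀ ^ r₀ * t ^ r₀ := by ring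
lemma pos_of_small (hφ : IsBoyd φ) {t₀ : ℝ} (ht₀ : t₀ ∈ Ioo (0:ℝ) 1)
    (hB : boydBar φ t₀ < 1) : 0 < lowerBoydIndex φ := by
  have hlt₀ : Real.log t₀ < 0 := Real.log_neg ht₀.1 ht₀.2
  have hlB : Real.log (boydBar φ t₀) < 0 := Real.log_neg (B_pos hφ ht₀.1) hB
  have hr : 0 < Real.log (boydBar φ t₀) / Real.log t₀ := div_pos_of_neg_of_neg hlB hlt₀
  have hmem : Real.log (boydBar φ t₀) / Real.log t₀ ∈
      {x : ℝ | ∃ t ∈ Set.Ioo (0:ℝ) 1, x = Real.log (boydBar φ t) / Real.log t} :=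
    ⟨t₀, ht₀, rfl⟩
  exact lt_of_lt_of_le hr (le_csSup (ratio_bddAbove hφ) hmem)

lemma tendsto_of_pos (hφ : IsBoyd φ) (hP : 0 < lowerBoydIndex φ) :
    Filter.Tendsto (boydBar φ) (nhdsWithin 0 (Set.Ioi 0)) (nhds 0) := by
  obtain ⟨c, hc, C, hC, hbound⟩ := main_bound hφ hP
  have hIoo : Ioo (0:ℝ) 1 ∈ nhdsWithin 0 (Set.Ioi (0:ℝ)) :=
    Ioo_mem_nhdsGT_of_mem ⟨le_refl 0, one_pos⟩
  refine squeeze_zero' (g := fun t : ℝ => C * t ^ c) ?_ ?_ ?_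
  · exact (eventually_mem_nhdsWithin).mono fun t ht => (B_pos hφ ht).le
  · exact Filter.eventually_of_mem hIoo fun t ht => hbound t ht
  · have h1 : Filter.Tendsto (fun t : ℝ => t ^ c) (nhds 0) (nhds 0) := by
      have := (Real.continuousAt_rpow_const 0 c (Or.inr hc.le)).tendsto
      rwa [Real.zero_rpow hc.ne'] at this
    have h2 : Filter.Tendsto (fun t : ℝ => C * t ^ c) (nhdsWithin 0 (Set.Ioi 0)) (nhds (C * 0)) :=
      (h1.const_mul C).mono_left nhdsWithin_le_nhds
    rwa [mul_zero] at h2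

lemma pos_of_tendsto (hφ : IsBoyd φ)
    (hT : Filter.Tendsto (boydBar φ) (nhdsWithin 0 (Set.Ioi 0)) (nhds 0)) :
    0 < lowerBoydIndex φ := by
  have h1 : ∀ᶠ t in nhdsWithin 0 (Set.Ioi (0:ℝ)), boydBar φ t < 1 :=
    hT.eventually_lt_const one_pos
  have h2 : ∀ᶠ t in nhdsWithin 0 (Set.Ioi (0:ℝ)), t ∈ Ioo (0:ℝ) 1 :=
    Filter.eventually_of_mem (Ioo_mem_nhdsGT_of_mem ⟨le_refl 0, one_pos⟩) fun t ht => ht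
  obtain ⟨t₀, hB, ht₀⟩ := (h1.and h2).exists
  exact pos_of_small hφ ht₀ hB

lemma aesm (hφ : IsBoyd φ) :
    AEStronglyMeasurable (fun t : ℝ => boydBar φ t / t) (volume.restrict (Ioo (0:ℝ) 1)) := by
  have hgm : Measurable (g φ) := (g_lsc hφ).measurable
  have hF : Measurable fun t : ℝ => Real.exp (g φ (Real.log t)) / t :=
    (Real.measurable_exp.comp (hgm.comp Real.measurable_log)).div measurable_id
  refine hF.aestronglyMeasurable.congr ?_
  filter_upwards [ae_restrict_mem measurableSet_Ioo] with t ht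
  rw [← B_eq_exp_g hφ ht.1]

lemma integrable_of_pos (hφ : IsBoyd φ) (hP : 0 < lowerBoydIndex φ) :
    MeasureTheory.IntegrableOn (fun t : ℝ => boydBar φ t / t) (Set.Ioo 0 1) volume := by
  obtain ⟨c, hc, C, hC, hbound⟩ := main_bound hφ hP
  have hint : IntegrableOn (fun t : ℝ => C * t ^ (c - 1)) (Ioo (0:ℝ) 1) volume := by
    have := (intervalIntegral.integrableOn_Ioo_rpow_iff (one_pos)).2 (show (-1:ℝ) < c - 1 by linarith)
    exact this.const_mul C
  refine hint.integrable.mono' (aesm hφ) ?_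
  filter_upwards [ae_restrict_mem measurableSet_Ioo] with t ht
  have htpos : 0 < t := ht.1
  have h1 : boydBar φ t / t ≤ C * t ^ c / t := by
    gcongr
    exact hbound t ht
  have h2 : C * t ^ c / t = C * t ^ (c - 1) := by
    rw [Real.rpow_sub_one htpos.ne']
    ring
  rw [Real.norm_eq_abs, abs_of_nonneg (div_nonneg (B_pos hφ htpos).le htpos.le)]
  calc boydBar φ t / t ≤ C * t ^ c / t := h1
    _ = C * t ^ (c - 1) := h2

lemma pos_of_integrable (hφ : IsBoyd φ)
    (hI : MeasureTheory.IntegrableOn (fun t : ℝ => boydBar φ t / t) (Set.Ioo 0 1) volume) :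
    0 < lowerBoydIndex φ := by
  by_contra hcon
  -- then boydBar φ t ≥ 1 for all t ∈ (0,1)
  have hge : ∀ t ∈ Ioo (0:ℝ) 1, 1 ≤ boydBar φ t := by
    intro t ht
    by_contra hlt
    push_neg at hlt
    exact hcon (pos_of_small hφ ht hlt)
  have hnot : ¬ IntegrableOn (fun t : ℝ => t⁻¹) (Ioo (0:ℝ) 1) volume := by
    rw [show (fun t : ℝ => t⁻¹) = (fun t : ℝ => t ^ (-1 : ℝ)) from
      funext fun t => (Real.rpow_neg_one t).symm]
    rw [intervalIntegral.integrableOn_Ioo_rpow_iff (one_pos)]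
    norm_num
  apply hnot
  refine hI.integrable.mono' ?_ ?_
  · exact measurable_inv.aestronglyMeasurable
  · filter_upwards [ae_restrict_mem measurableSet_Ioo] with t ht
    have htpos : 0 < t := ht.1
    rw [Real.norm_eq_abs, abs_of_nonneg (inv_nonneg.2 htpos.le), inv_eq_one_div]
    gcongr
    exact hge t ht

end BoydAux

theorem lowerBoydIndex_pos_iff (φ : ℝ → ℝ) (hφ : IsBoyd φ) :
    (0 < lowerBoydIndex φ ↔
      Filter.Tendsto (boydBar φ) (nhdsWithin 0 (Set.Ioi 0)) (nhds 0)) ∧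
    (0 < lowerBoydIndex φ ↔
      MeasureTheory.IntegrableOn (fun t : ℝ => boydBar φ t / t) (Set.Ioo 0 1) volume) := by
  exact ⟨⟨BoydAux.tendsto_of_pos hφ, BoydAux.pos_of_tendsto hφ⟩,
    ⟨BoydAux.integrable_of_pos hφ, BoydAux.pos_of_integrable hφ⟩⟩
end

section
/- Let p ∈ [1,∞] and φ₁,...,φₙ Boyd functions satisfying condition (𝓗₁). If a belongs to the multi-parameter K-interpolation space K_p^{φ₁,...,φₙ}(A), then there is a constant C > 0 (independent of a and t) with K(1,t₁,...,tₙ,a) ≤ C φ₁(t₁)···φₙ(tₙ) ‖a‖_{K_p^{φ₁,...,φₙ}(A)} for all (t₁,...,tₙ) ∈ (0,∞)ⁿ. -/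
open Real Set MeasureTheory
open scoped ENNReal

/-- The multi-parameter K-functional of a tuple of Banach spaces `E j` continuously
embedded into a common topological vector space `𝒜` via `ι j`. -/
noncomputable def Kfun {𝒜 : Type*} [AddCommGroup 𝒜] [Module ℝ 𝒜] [TopologicalSpace 𝒜]
    {m : ℕ} {E : Fin m → Type*} [∀ j, NormedAddCommGroup (E j)] [∀ j, NormedSpace ℝ (E j)]
    (ι : ∀ j, E j →L[ℝ] 𝒜) (t : Fin m → ℝ) (a : 𝒜) : ℝ :=
  sInf {x : ℝ | ∃ v : ∀ j, E j, a = ∑ j, ι j (v j) ∧ x = ∑ j, t j * ‖v j‖}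

/-- The Haar-type measure `dt₁/t₁ ⋯ dtₙ/tₙ` on the positive orthant of `(0,∞)ⁿ`. -/
noncomputable def haarMeas (n : ℕ) : Measure (Fin n → ℝ) :=
  ((MeasureTheory.Measure.pi fun _ => (volume : Measure ℝ)).restrict
      {t : Fin n → ℝ | ∀ j, 0 < t j}).withDensity
    (fun t => ENNReal.ofReal (∏ j, (t j)⁻¹))

/-- The (quasi-)norm of the multi-parameter interpolation space `K_p^{φ₁,…,φₙ}(A)`. -/
noncomputable def Knorm {𝒜 : Type*} [AddCommGroup 𝒜] [Module ℝ 𝒜] [TopologicalSpace 𝒜]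
    {n : ℕ} {E : Fin (n + 1) → Type*} [∀ j, NormedAddCommGroup (E j)]
    [∀ j, NormedSpace ℝ (E j)]
    (ι : ∀ j, E j →L[ℝ] 𝒜) (φ : Fin n → ℝ → ℝ) (p : ℝ≥0∞) (a : 𝒜) : ℝ≥0∞ :=
  eLpNorm (fun t : Fin n → ℝ => Kfun ι (Fin.cons 1 t) a / ∏ j, φ j (t j)) p (haarMeas n)

/-- Condition `(𝓗₁)`. -/
def CondH1 {n : ℕ} (φ : Fin n → ℝ → ℝ) (p : ℝ≥0∞) : Prop :=
  eLpNorm (fun t : Fin n → ℝ => min 1 (⨅ j, t j) / ∏ j, φ j (t j)) p (haarMeas n) < ⊤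

/-! ### Auxiliary material on Boyd functions -/

/-- A measurable modification of `φ`, agreeing with `φ` on `(0, ∞)`. -/
noncomputable def phiClip (φ : ℝ → ℝ) : ℝ → ℝ :=
  Function.extend (Subtype.val : Set.Ioi (0:ℝ) → ℝ) (fun x => φ x) (fun _ => 1)

lemma phiClip_eq (φ : ℝ → ℝ) {x : ℝ} (hx : 0 < x) : phiClip φ x = φ x := by
  have : x = ((⟨x, hx⟩ : Set.Ioi (0:ℝ)) : ℝ) := rfl
  rw [phiClip, this, Subtype.val_injective.extend_apply]

lemma phiClip_measurable {φ : ℝ → ℝ} (hφ : ContinuousOn φ (Set.Ioi 0)) :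
    Measurable (phiClip φ) := by
  apply (MeasurableEmbedding.subtype_coe measurableSet_Ioi).measurable_extend
  · exact (hφ.restrict).measurable
  · exact measurable_const

/-- A measurable version of the dilation function of a Boyd function, as a countable
supremum over positive rationals. -/
noncomputable def BB (φ : ℝ → ℝ) (u : ℝ) : ℝ :=
  ⨆ q : {q : ℚ // 0 < q}, phiClip φ (u * q) / φ q

lemma BB_measurable {φ : ℝ → ℝ} (hφ : ContinuousOn φ (Set.Ioi 0)) : Measurable (BB φ) := by
  apply Measurable.iSup
  intro q
  exact ((phiClip_measurable hφ).comp (measurable_id.mul_const _)).div_const _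

lemma BB_bddAbove {φ : ℝ → ℝ} (hφ : IsBoyd φ) {u : ℝ} (hu : 0 < u) :
    BddAbove (Set.range fun q : {q : ℚ // 0 < q} => phiClip φ (u * q) / φ q) := by
  apply (hφ.fin u hu).mono
  rintro x ⟨q, rfl⟩
  have hq : (0:ℝ) < (q : ℚ) := by exact_mod_cast q.2
  exact ⟨(q : ℚ), hq, by simp [phiClip_eq φ (mul_pos hu hq)]⟩

lemma le_BB {φ : ℝ → ℝ} (hφ : IsBoyd φ) {u : ℝ} (hu : 0 < u) : φ u ≤ BB φ u := by
  have h1 : phiClip φ (u * ((1:ℚ):ℝ)) / φ ((1:ℚ):ℝ) ≤ BB φ u :=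
    le_ciSup (BB_bddAbove hφ hu) ⟨1, one_pos⟩
  simpa [phiClip_eq φ (by simpa using hu), hφ.one] using h1

lemma BB_pos {φ : ℝ → ℝ} (hφ : IsBoyd φ) {u : ℝ} (hu : 0 < u) : 0 < BB φ u :=
  lt_of_lt_of_le (hφ.pos u hu) (le_BB hφ hu)

/-- The key submultiplicative estimate: `φ (u * s) ≤ BB φ u * φ s` for `u, s > 0`. -/
lemma phi_mul_le {φ : ℝ → ℝ} (hφ : IsBoyd φ) {u : ℝ} (hu : 0 < u) (s : ℝ) (hs : 0 < s) :
    φ (u * s) ≤ BB φ u * φ s := by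
  have key : φ (u * s) / φ s ≤ BB φ u → φ (u * s) ≤ BB φ u * φ s := by
    intro h
    have := (div_le_iff₀ (hφ.pos s hs)).mp h
    linarith [this]
  apply key
  have hrat : ∀ q : ℚ, 0 < q → φ (u * q) / φ q ≤ BB φ u := by
    intro q hq
    have h1 : phiClip φ (u * q) / φ q ≤ BB φ u := le_ciSup (BB_bddAbove hφ hu) ⟨q, hq⟩
    have hq' : (0:ℝ) < (q:ℝ) := by exact_mod_cast hq
    rwa [phiClip_eq φ (mul_pos hu hq')] at h1
  have hseq : ∀ k : ℕ, ∃ q : ℚ, max (s/2) (s - 1/(k+1)) < (q:ℝ) ∧ (q:ℝ) < s := fun k => by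
    apply exists_rat_btwn
    apply max_lt (by linarith)
    have : (0:ℝ) < 1/(k+1) := by positivity
    linarith
  choose q hq1 hq2 using hseq
  have hqpos : ∀ k, (0:ℝ) < (q k : ℝ) := fun k =>
    lt_of_le_of_lt (le_trans (by linarith : (0:ℝ) ≤ s/2) (le_max_left _ _)) (hq1 k)
  have htend : Filter.Tendsto (fun k => (q k : ℝ)) Filter.atTop (nhds s) := by
    have hlow : Filter.Tendsto (fun k : ℕ => max (s/2) (s - 1/(k+1))) Filter.atTop
        (nhds (max (s/2) s)) := by
      apply Filter.Tendsto.max tendsto_const_nhds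
      have : Filter.Tendsto (fun k : ℕ => 1/((k:ℝ)+1)) Filter.atTop (nhds 0) :=
        tendsto_one_div_add_atTop_nhds_zero_nat
      simpa using tendsto_const_nhds.sub this
    rw [max_eq_right (by linarith)] at hlow
    exact tendsto_of_tendsto_of_tendsto_of_le_of_le hlow tendsto_const_nhds
      (fun k => le_of_lt (hq1 k)) (fun k => le_of_lt (hq2 k))
  have hcont : ContinuousAt (fun x : ℝ => φ (u * x) / φ x) s := by
    have h1 : ContinuousAt φ (u * s) :=
      hφ.cont.continuousAt (isOpen_Ioi.mem_nhds (mul_pos hu hs))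
    have h2 : ContinuousAt φ s := hφ.cont.continuousAt (isOpen_Ioi.mem_nhds hs)
    exact (h1.comp ((continuous_const.mul continuous_id).continuousAt)).div h2
      (ne_of_gt (hφ.pos s hs))
  have hlim : Filter.Tendsto (fun k => φ (u * (q k : ℝ)) / φ (q k : ℝ)) Filter.atTop
      (nhds (φ (u * s) / φ s)) := hcont.tendsto.comp htend
  exact le_of_tendsto hlim
    (Filter.Eventually.of_forall fun k => hrat (q k) (by exact_mod_cast hqpos k))

/-! ### Auxiliary material on the K-functional -/

section K
variable {𝒜 : Type*} [AddCommGroup 𝒜] [Module ℝ 𝒜] [TopologicalSpace 𝒜]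
    {m : ℕ} {E : Fin m → Type*} [∀ j, NormedAddCommGroup (E j)] [∀ j, NormedSpace ℝ (E j)]
    (ι : ∀ j, E j →L[ℝ] 𝒜) {a : 𝒜}

lemma Kfun_nonneg {w : Fin m → ℝ} (hw : ∀ j, 0 ≤ w j) : 0 ≤ Kfun ι w a := by
  apply Real.sInf_nonneg
  rintro x ⟨v, _, rfl⟩
  exact Finset.sum_nonneg fun j _ => mul_nonneg (hw j) (norm_nonneg _)

lemma Kfun_scale (ha : ∃ v : ∀ j, E j, a = ∑ j, ι j (v j)) {c : ℝ} (hc : 0 ≤ c)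
    {w w' : Fin m → ℝ} (hw : ∀ j, 0 ≤ w j) (h : ∀ j, c * w j ≤ w' j) :
    c * Kfun ι w a ≤ Kfun ι w' a := by
  obtain ⟨v₀, hv₀⟩ := ha
  have hne : {x : ℝ | ∃ v : ∀ j, E j, a = ∑ j, ι j (v j) ∧ x = ∑ j, w' j * ‖v j‖}.Nonempty :=
    ⟨_, v₀, hv₀, rfl⟩
  apply le_csInf hne
  rintro x ⟨v, hv, rfl⟩
  calc c * Kfun ι w a ≤ c * ∑ j, w j * ‖v j‖ := by
        apply mul_le_mul_of_nonneg_left _ hc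
        apply csInf_le
        · refine ⟨0, ?_⟩
          rintro y ⟨v', _, rfl⟩
          exact Finset.sum_nonneg fun j _ => mul_nonneg (hw j) (norm_nonneg _)
        · exact ⟨v, hv, rfl⟩
    _ = ∑ j, (c * w j) * ‖v j‖ := by rw [Finset.mul_sum]; simp [mul_assoc]
    _ ≤ ∑ j, w' j * ‖v j‖ :=
        Finset.sum_le_sum fun j _ => mul_le_mul_of_nonneg_right (h j) (norm_nonneg _)

end K

/-! ### Auxiliary material on the Haar-type measure -/

section Meas
variable {n : ℕ}

lemma measurableSet_orthant : MeasurableSet {t : Fin n → ℝ | ∀ j, 0 < t j} := by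
  rw [Set.setOf_forall]
  exact MeasurableSet.iInter fun j => measurableSet_lt measurable_const (measurable_pi_apply j)

lemma haar_ae_pos : ∀ᵐ u ∂(haarMeas n), ∀ j, 0 < u j := by
  have h0 : ((MeasureTheory.Measure.pi fun _ : Fin n => (volume : Measure ℝ)).restrict
      {t : Fin n → ℝ | ∀ j, 0 < t j}) {t : Fin n → ℝ | ∀ j, 0 < t j}ᶜ = 0 := by
    rw [Measure.restrict_apply measurableSet_orthant.compl, Set.compl_inter_self,
      measure_empty]
  have habs := withDensity_absolutelyContinuous
    ((MeasureTheory.Measure.pi fun _ : Fin n => (volume : Measure ℝ)).restrict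
      {t : Fin n → ℝ | ∀ j, 0 < t j}) (fun t => ENNReal.ofReal (∏ j, (t j)⁻¹))
  rw [ae_iff]
  have : haarMeas n {t : Fin n → ℝ | ∀ j, 0 < t j}ᶜ = 0 := habs h0
  simpa [haarMeas, Set.compl_setOf] using this

/-- The Haar-type measure is invariant under positive coordinatewise dilations. -/
lemma haar_dilation (t : Fin n → ℝ) (ht : ∀ j, 0 < t j) :
    MeasurePreserving (fun u : Fin n → ℝ => fun j => t j * u j) (haarMeas n) (haarMeas n) := by
  set T : (Fin n → ℝ) → (Fin n → ℝ) := fun u => fun j => t j * u j with hT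
  have hTm : Measurable T := by
    apply measurable_pi_lambda
    intro j
    exact (measurable_pi_apply j).const_mul _
  refine ⟨hTm, ?_⟩
  have htprod : (0:ℝ) < ∏ j, t j := Finset.prod_pos fun j _ => ht j
  have hdet : LinearMap.det (Matrix.toLin' (Matrix.diagonal t)) = ∏ j, t j := by
    rw [LinearMap.det_toLin', Matrix.det_diagonal]
  have hTlin : T = ⇑(Matrix.toLin' (Matrix.diagonal t)) := by
    funext u
    ext j
    simp [T, Matrix.toLin'_apply, Matrix.mulVec_diagonal]
  have hmapvol : Measure.map T (volume : Measure (Fin n → ℝ)) =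
      ENNReal.ofReal ((∏ j, t j)⁻¹) • (volume : Measure (Fin n → ℝ)) := by
    rw [hTlin]
    rw [Real.map_linearMap_volume_pi_eq_smul_volume_pi (by rw [hdet]; exact ne_of_gt htprod)]
    rw [hdet, abs_of_pos (by positivity)]
  set P : Set (Fin n → ℝ) := {u : Fin n → ℝ | ∀ j, 0 < u j} with hP
  have hPT : T ⁻¹' P = P := by
    ext u
    simp only [Set.mem_preimage, Set.mem_setOf_eq, hP, T]
    constructor
    · intro h j
      have := h j
      nlinarith [ht j]
    · intro h j
      exact mul_pos (ht j) (h j)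
  set ρ : (Fin n → ℝ) → ℝ≥0∞ := fun u => ENNReal.ofReal (∏ j, (u j)⁻¹) with hρ
  have hρm : Measurable ρ :=
    (Finset.measurable_prod _ fun j _ => (measurable_pi_apply j).inv).ennreal_ofReal
  have hvol : (MeasureTheory.Measure.pi fun _ : Fin n => (volume : Measure ℝ)) =
      (volume : Measure (Fin n → ℝ)) := (MeasureTheory.volume_pi).symm
  have hρT : ∀ u : Fin n → ℝ, ρ (T u) = ENNReal.ofReal ((∏ j, t j)⁻¹) * ρ u := by
    intro u
    have : (∏ j, (t j * u j)⁻¹) = (∏ j, t j)⁻¹ * ∏ j, (u j)⁻¹ := by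
      rw [← Finset.prod_inv_distrib, ← Finset.prod_mul_distrib]
      exact Finset.prod_congr rfl fun j _ => _root_.mul_inv _ _
    simp only [hρ, T, this]
    rw [ENNReal.ofReal_mul (by positivity)]
  ext A hA
  rw [Measure.map_apply hTm hA]
  simp only [haarMeas, hvol]
  rw [withDensity_apply _ (hTm hA), withDensity_apply _ hA,
    Measure.restrict_restrict (hTm hA), Measure.restrict_restrict hA]
  have hinter : T ⁻¹' A ∩ P = T ⁻¹' (A ∩ P) := by rw [Set.preimage_inter, hPT]
  have hAP : MeasurableSet (A ∩ P) := hA.inter measurableSet_orthant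
  show ∫⁻ u in T ⁻¹' A ∩ P, ρ u ∂volume = ∫⁻ s in A ∩ P, ρ s ∂volume
  rw [hinter]
  have h1 : (volume : Measure (Fin n → ℝ)) =
      ENNReal.ofReal (∏ j, t j) • Measure.map T volume := by
    rw [hmapvol, smul_smul, ← ENNReal.ofReal_mul (le_of_lt htprod),
      mul_inv_cancel₀ (ne_of_gt htprod), ENNReal.ofReal_one, one_smul]
  calc ∫⁻ u in T ⁻¹' (A ∩ P), ρ u ∂volume
      = ∫⁻ u in T ⁻¹' (A ∩ P), ENNReal.ofReal (∏ j, t j) * ρ (T u) ∂volume := by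
        apply lintegral_congr
        intro u
        rw [hρT u, ← mul_assoc, ← ENNReal.ofReal_mul (le_of_lt htprod),
          mul_inv_cancel₀ (ne_of_gt htprod), ENNReal.ofReal_one, one_mul]
    _ = ENNReal.ofReal (∏ j, t j) * ∫⁻ u in T ⁻¹' (A ∩ P), ρ (T u) ∂volume := by
        rw [lintegral_const_mul' _ _ ENNReal.ofReal_ne_top]
    _ = ENNReal.ofReal (∏ j, t j) * ∫⁻ s in A ∩ P, ρ s ∂(Measure.map T volume) := by
        rw [setLIntegral_map hAP hρm hTm]
    _ = ∫⁻ s in A ∩ P, ρ s ∂volume := by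
        conv_rhs => rw [h1]
        rw [Measure.restrict_smul, lintegral_smul_measure, smul_eq_mul]

/-- The unit-type cube `(1,2]ⁿ` has positive Haar-type measure. -/
lemma haar_cube_pos : 0 < haarMeas n (Set.univ.pi fun _ : Fin n => Set.Ioc (1:ℝ) 2) := by
  set C : Set (Fin n → ℝ) := Set.univ.pi fun _ : Fin n => Set.Ioc (1:ℝ) 2 with hC
  have hCm : MeasurableSet C := MeasurableSet.univ_pi fun _ => measurableSet_Ioc
  have hCP : C ⊆ {t : Fin n → ℝ | ∀ j, 0 < t j} := by
    intro u hu j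
    have := hu j (Set.mem_univ j)
    exact lt_trans one_pos this.1
  rw [haarMeas, withDensity_apply _ hCm, Measure.restrict_restrict hCm,
    Set.inter_eq_self_of_subset_left hCP]
  have hlow : ∀ u ∈ C, ENNReal.ofReal ((1/2 : ℝ)^n) ≤ ENNReal.ofReal (∏ j, (u j)⁻¹) := by
    intro u hu
    apply ENNReal.ofReal_le_ofReal
    have : ((1/2 : ℝ)^n) = ∏ _j : Fin n, (1/2 : ℝ) := by
      rw [Finset.prod_const]; simp
    rw [this]
    apply Finset.prod_le_prod (fun j _ => by norm_num)
    intro j _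
    have hj := hu j (Set.mem_univ j)
    have h2 : (0:ℝ) < u j := lt_trans one_pos hj.1
    have := hj.2
    rw [one_div, inv_le_inv₀ (by norm_num) h2]
    exact this
  have : ENNReal.ofReal ((1/2 : ℝ)^n) *
      (MeasureTheory.Measure.pi fun _ : Fin n => (volume : Measure ℝ)) C ≤
      ∫⁻ u in C, ENNReal.ofReal (∏ j, (u j)⁻¹)
        ∂(MeasureTheory.Measure.pi fun _ : Fin n => (volume : Measure ℝ)) := by
    rw [← setLIntegral_const C _]
    exact setLIntegral_mono
      ((Finset.measurable_prod _ fun j _ => (measurable_pi_apply j).inv).ennreal_ofReal) hlow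
  apply lt_of_lt_of_le _ this
  apply ENNReal.mul_pos
  · exact (ENNReal.ofReal_pos.mpr (by positivity)).ne'
  · rw [hC, MeasureTheory.Measure.pi_pi]
    simp [Real.volume_Ioc]

end Meas

theorem Kfun_le_of_mem_Kspace {𝒜 : Type*} [AddCommGroup 𝒜] [Module ℝ 𝒜]
    [TopologicalSpace 𝒜] [IsTopologicalAddGroup 𝒜] [ContinuousSMul ℝ 𝒜] [T2Space 𝒜]
    {n : ℕ} (hn : 0 < n) {E : Fin (n + 1) → Type*} [∀ j, NormedAddCommGroup (E j)]
    [∀ j, NormedSpace ℝ (E j)] [∀ j, CompleteSpace (E j)]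
    (ι : ∀ j, E j →L[ℝ] 𝒜)
    (φ : Fin n → ℝ → ℝ) (hB : ∀ j, IsBoyd (φ j))
    (p : ℝ≥0∞) (hp : 1 ≤ p) (hH1 : CondH1 φ p) :
    ∃ C > (0:ℝ), ∀ a : 𝒜, (∃ v : ∀ j, E j, a = ∑ j, ι j (v j)) →
      ∀ t : Fin n → ℝ, (∀ j, 0 < t j) →
        ENNReal.ofReal (Kfun ι (Fin.cons 1 t) a) ≤
          ENNReal.ofReal (C * ∏ j, φ j (t j)) * Knorm ι φ p a := by
  classical
  haveI : Nonempty (Fin n) := ⟨⟨0, hn⟩⟩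
  set μ := haarMeas n with hμdef
  set B : Fin n → ℝ → ℝ := fun j => BB (φ j) with hBdef
  set h : (Fin n → ℝ) → ℝ := fun u => min 1 (⨅ j, u j) / ∏ j, B j (u j) with hhdef
  have hmeas_h : Measurable h := by
    apply Measurable.div
    · exact measurable_const.min (Measurable.iInf fun j => measurable_pi_apply j)
    · exact Finset.measurable_prod _ fun j _ =>
        (BB_measurable (hB j).cont).comp (measurable_pi_apply j)
  set c₀ := eLpNorm h p μ with hc₀def
  have hp0 : p ≠ 0 := fun h0 => by rw [h0] at hp; simp at hp
  have h_inf_pos : ∀ u : Fin n → ℝ, (∀ j, 0 < u j) → 0 < ⨅ j, u j := by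
    intro u hu
    obtain ⟨j₀, hj₀⟩ := Finite.exists_min u
    exact lt_of_lt_of_le (hu j₀) (le_ciInf hj₀)
  have h_inf_le : ∀ (u : Fin n → ℝ) (j : Fin n), (⨅ i, u i) ≤ u j := fun u j =>
    ciInf_le (Set.Finite.bddBelow (Set.finite_range u)) j
  have hBpos : ∀ (j : Fin n) (x : ℝ), 0 < x → 0 < B j x := fun j x hx => BB_pos (hB j) hx
  have hφpos : ∀ (j : Fin n) (x : ℝ), 0 < x → 0 < φ j x := fun j x hx => (hB j).pos x hx
  -- `c₀` is finite, by condition (𝓗₁)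
  have hc₀_fin : c₀ ≠ ⊤ := by
    apply ne_of_lt (lt_of_le_of_lt _ hH1)
    apply eLpNorm_mono_ae
    filter_upwards [haar_ae_pos] with u hu
    have h1 : 0 < ⨅ j, u j := h_inf_pos u hu
    have hm : 0 < min 1 (⨅ j, u j) := lt_min one_pos h1
    have hBp : 0 < ∏ j, B j (u j) := Finset.prod_pos fun j _ => hBpos j _ (hu j)
    have hφp : 0 < ∏ j, φ j (u j) := Finset.prod_pos fun j _ => hφpos j _ (hu j)
    rw [Real.norm_of_nonneg (by positivity), Real.norm_of_nonneg (by positivity)]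
    apply div_le_div_of_nonneg_left hm.le hφp
    exact Finset.prod_le_prod (fun j _ => (hφpos j _ (hu j)).le)
      (fun j _ => le_BB (hB j) (hu j))
  -- `c₀` is nonzero
  have hc₀_ne : c₀ ≠ 0 := by
    intro h0
    have hae := (eLpNorm_eq_zero_iff hmeas_h.aestronglyMeasurable hp0).mp h0
    have hfalse : ∀ᵐ u ∂μ, False := by
      filter_upwards [hae, haar_ae_pos] with u hu0 hupos
      have h1 : 0 < ⨅ j, u j := h_inf_pos u hupos
      have hm : 0 < min 1 (⨅ j, u j) := lt_min one_pos h1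
      have hBp : 0 < ∏ j, B j (u j) := Finset.prod_pos fun j _ => hBpos j _ (hupos j)
      have : 0 < h u := div_pos hm hBp
      rw [Pi.zero_apply] at hu0
      exact absurd hu0 (ne_of_gt this)
    have hμ0 : μ = 0 := by
      have := hfalse
      rw [ae_iff] at this
      simpa using Measure.measure_univ_eq_zero.mp (by simpa using this)
    have := haar_cube_pos (n := n)
    rw [← hμdef, hμ0] at this
    simp at this
  have hc₀pos : 0 < c₀.toReal := ENNReal.toReal_pos hc₀_ne hc₀_fin
  refine ⟨(c₀.toReal)⁻¹, inv_pos.mpr hc₀pos, ?_⟩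
  intro a ha t ht
  have hconsw : ∀ (x : Fin n → ℝ), (∀ j, 0 < x j) → ∀ j : Fin (n+1), 0 ≤ (Fin.cons 1 x : Fin (n+1) → ℝ) j := by
    intro x hx j
    refine Fin.cases ?_ ?_ j
    · norm_num
    · intro i; simp [le_of_lt (hx i)]
  set Kt := Kfun ι (Fin.cons 1 t) a with hKtdef
  have hKt0 : 0 ≤ Kt := Kfun_nonneg ι (hconsw t ht)
  have hφtpos : 0 < ∏ j, φ j (t j) := Finset.prod_pos fun j _ => hφpos j _ (ht j)
  have hT' := haar_dilation (fun j => (t j)⁻¹) (fun j => inv_pos.mpr (ht j))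
  -- the left-hand side function and its norm
  have A1 : eLpNorm (fun s : Fin n → ℝ => Kt * h (fun j => (t j)⁻¹ * s j)) p μ
      = ENNReal.ofReal Kt * c₀ := by
    have hfe : (fun s : Fin n → ℝ => Kt * h (fun j => (t j)⁻¹ * s j))
        = Kt • (h ∘ (fun s : Fin n → ℝ => fun j => (t j)⁻¹ * s j)) := rfl
    rw [hfe, eLpNorm_const_smul,
      eLpNorm_comp_measurePreserving hmeas_h.aestronglyMeasurable hT']
    rw [Real.enorm_eq_ofReal hKt0]
  -- the right-hand side function and its norm
  have A2 : eLpNorm (fun s : Fin n → ℝ =>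
        (∏ j, φ j (t j)) * (Kfun ι (Fin.cons 1 s) a / ∏ j, φ j (s j))) p μ
      = ENNReal.ofReal (∏ j, φ j (t j)) * Knorm ι φ p a := by
    have hfe : (fun s : Fin n → ℝ =>
        (∏ j, φ j (t j)) * (Kfun ι (Fin.cons 1 s) a / ∏ j, φ j (s j)))
        = (∏ j, φ j (t j)) •
          (fun s : Fin n → ℝ => Kfun ι (Fin.cons 1 s) a / ∏ j, φ j (s j)) := rfl
    rw [hfe, eLpNorm_const_smul, Real.enorm_eq_ofReal hφtpos.le]
    rfl
  -- the pointwise comparison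
  have A3 : ∀ᵐ s ∂μ, ‖Kt * h (fun j => (t j)⁻¹ * s j)‖ ≤
      ‖(∏ j, φ j (t j)) * (Kfun ι (Fin.cons 1 s) a / ∏ j, φ j (s j))‖ := by
    filter_upwards [haar_ae_pos] with s hs
    set u : Fin n → ℝ := fun j => (t j)⁻¹ * s j with hudef
    have hupos : ∀ j, 0 < u j := fun j => mul_pos (inv_pos.mpr (ht j)) (hs j)
    set m := min 1 (⨅ j, u j) with hmdef
    have hm0 : 0 < m := lt_min one_pos (h_inf_pos u hupos)
    have hm1 : m ≤ 1 := min_le_left _ _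
    set Ks := Kfun ι (Fin.cons 1 s) a with hKsdef
    have hKs0 : 0 ≤ Ks := Kfun_nonneg ι (hconsw s hs)
    have hBu : 0 < ∏ j, B j (u j) := Finset.prod_pos fun j _ => hBpos j _ (hupos j)
    have hφs : 0 < ∏ j, φ j (s j) := Finset.prod_pos fun j _ => hφpos j _ (hs j)
    have key1 : m * Kt ≤ Ks := by
      apply Kfun_scale ι ha hm0.le (hconsw t ht)
      intro j
      refine Fin.cases ?_ ?_ j
      · simpa using hm1
      · intro i
        simp only [Fin.cons_succ]
        have h2 : m ≤ u i := le_trans (min_le_right _ _) (h_inf_le u i)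
        have h3 : t i * m ≤ t i * u i := mul_le_mul_of_nonneg_left h2 (ht i).le
        have h4 : t i * u i = s i := by
          show t i * ((t i)⁻¹ * s i) = s i
          rw [← mul_assoc, mul_inv_cancel₀ (ht i).ne', one_mul]
        linarith [h3, h4.le, h4.ge]
    have key2 : (∏ j, φ j (s j)) ≤ (∏ j, B j (u j)) * ∏ j, φ j (t j) := by
      rw [← Finset.prod_mul_distrib]
      apply Finset.prod_le_prod (fun j _ => (hφpos j _ (hs j)).le)
      intro j _
      have hb := phi_mul_le (hB j) (hupos j) (t j) (ht j)
      have hs' : u j * t j = s j := by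
        show ((t j)⁻¹ * s j) * t j = s j
        rw [mul_comm, ← mul_assoc, mul_inv_cancel₀ (ht j).ne', one_mul]
      rwa [hs'] at hb
    have hgoal : Kt * h u ≤ (∏ j, φ j (t j)) * (Ks / ∏ j, φ j (s j)) := by
      have hlhs : Kt * h u = (Kt * m) / ∏ j, B j (u j) := by
        rw [hhdef]
        ring
      have hrhs : (∏ j, φ j (t j)) * (Ks / ∏ j, φ j (s j))
          = ((∏ j, φ j (t j)) * Ks) / ∏ j, φ j (s j) := by ring
      rw [hlhs, hrhs, div_le_div_iff₀ hBu hφs]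
      calc Kt * m * ∏ j, φ j (s j) = (m * Kt) * ∏ j, φ j (s j) := by ring
        _ ≤ Ks * ∏ j, φ j (s j) := mul_le_mul_of_nonneg_right key1 hφs.le
        _ ≤ Ks * ((∏ j, B j (u j)) * ∏ j, φ j (t j)) :=
            mul_le_mul_of_nonneg_left key2 hKs0
        _ = (∏ j, φ j (t j)) * Ks * ∏ j, B j (u j) := by ring
    have hLnn : 0 ≤ Kt * h u := by
      have : 0 ≤ h u := le_of_lt (div_pos hm0 hBu)
      positivity
    have hRnn : 0 ≤ (∏ j, φ j (t j)) * (Ks / ∏ j, φ j (s j)) := by positivity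
    rw [Real.norm_of_nonneg hLnn, Real.norm_of_nonneg hRnn]
    exact hgoal
  -- the main estimate
  have main : ENNReal.ofReal Kt * c₀ ≤ ENNReal.ofReal (∏ j, φ j (t j)) * Knorm ι φ p a := by
    rw [← A1, ← A2]
    exact eLpNorm_mono_ae A3
  calc ENNReal.ofReal Kt = (ENNReal.ofReal Kt * c₀) * c₀⁻¹ := by
        rw [mul_assoc, ENNReal.mul_inv_cancel hc₀_ne hc₀_fin, mul_one]
    _ ≤ (ENNReal.ofReal (∏ j, φ j (t j)) * Knorm ι φ p a) * c₀⁻¹ :=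
        mul_le_mul_left main _
    _ = ENNReal.ofReal ((c₀.toReal)⁻¹ * ∏ j, φ j (t j)) * Knorm ι φ p a := by
        rw [ENNReal.ofReal_mul (by positivity), ENNReal.ofReal_inv_of_pos hc₀pos,
          ENNReal.ofReal_toReal hc₀_fin]
        ring
end

section
/- If condition (𝓗₁) fails for Boyd functions φ₁,...,φₙ and p ∈ [1,∞], then K_p^{φ₁,...,φₙ}(A) = {0}, i.e. every a with ‖a‖_{K_p^{φ₁,...,φₙ}(A)} < ∞ satisfies a = 0. -/
open Real Set MeasureTheory
open scoped ENNReal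

theorem Kspace_trivial_of_not_condH1 {𝒜 : Type*} [AddCommGroup 𝒜] [Module ℝ 𝒜]
    [TopologicalSpace 𝒜] [IsTopologicalAddGroup 𝒜] [ContinuousSMul ℝ 𝒜] [T2Space 𝒜]
    {n : ℕ} (hn : 0 < n) {E : Fin (n + 1) → Type*} [∀ j, NormedAddCommGroup (E j)]
    [∀ j, NormedSpace ℝ (E j)] [∀ j, CompleteSpace (E j)]
    (ι : ∀ j, E j →L[ℝ] 𝒜)
    (φ : Fin n → ℝ → ℝ) (hB : ∀ j, IsBoyd (φ j))
    (p : ℝ≥0∞) (hp : 1 ≤ p) (hH1 : ¬ CondH1 φ p) :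
    ∀ a : 𝒜, (∃ v : ∀ j, E j, a = ∑ j, ι j (v j)) →
      Knorm ι φ p a < ⊤ → a = 0 := by
  intro a ha hK
  by_contra h0
  -- Step 1: a positive lower bound on the sum-space norm of a
  have hc : ∃ c : ℝ, 0 < c ∧ ∀ v : ∀ j, E j, a = ∑ j, ι j (v j) → c ≤ ∑ j, ‖v j‖ := by
    by_contra hcon
    push_neg at hcon
    have hseq : ∀ k : ℕ, ∃ v : ∀ j, E j, a = ∑ j, ι j (v j) ∧ ∑ j, ‖v j‖ < 1 / (k + 1) := by
      intro k
      obtain ⟨v, hv1, hv2⟩ := hcon (1 / (k + 1)) (by positivity)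
      exact ⟨v, hv1, hv2⟩
    choose v hv1 hv2 using hseq
    have hlim : Filter.Tendsto (fun k => ∑ j, ι j (v k j)) Filter.atTop (nhds (0 : 𝒜)) := by
      have hterm : ∀ j, Filter.Tendsto (fun k => ι j (v k j)) Filter.atTop (nhds (0 : 𝒜)) := by
        intro j
        have hv : Filter.Tendsto (fun k => v k j) Filter.atTop (nhds (0 : E j)) := by
          rw [tendsto_zero_iff_norm_tendsto_zero]
          refine squeeze_zero (fun k => norm_nonneg _) (fun k => ?_)
            tendsto_one_div_add_atTop_nhds_zero_nat
          calc ‖v k j‖ ≤ ∑ i, ‖v k i‖ :=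
                Finset.single_le_sum (fun i _ => norm_nonneg _) (Finset.mem_univ j)
            _ ≤ 1 / (k + 1) := (hv2 k).le
        have := ((ι j).continuous.tendsto 0).comp hv
        simpa [Function.comp_def] using this
      have := tendsto_finset_sum Finset.univ (fun j _ => hterm j)
      simpa using this
    have heq : (fun k => ∑ j, ι j (v k j)) = fun _ => a := funext fun k => (hv1 k).symm
    rw [heq] at hlim
    exact h0 (tendsto_nhds_unique tendsto_const_nhds hlim)
  obtain ⟨c, hcpos, hclb⟩ := hc
  obtain ⟨w, hw⟩ := ha
  have hnF : Nonempty (Fin n) := Fin.pos_iff_nonempty.mp hn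
  -- Step 2: pointwise estimate on the positive orthant
  have key : ∀ t : Fin n → ℝ, (∀ j, 0 < t j) →
      ‖min 1 (⨅ j, t j) / ∏ j, φ j (t j)‖ ≤
        ‖((c⁻¹ : ℝ) • fun s : Fin n → ℝ => Kfun ι (Fin.cons 1 s) a / ∏ j, φ j (s j)) t‖ := by
    intro t ht
    have hbdd : BddBelow (Set.range t) := (Set.finite_range t).bddBelow
    have hinf_pos : 0 < ⨅ j, t j := by
      obtain ⟨j0, hj0⟩ := (Set.range_nonempty t).csInf_mem (Set.finite_range t)
      have : sInf (Set.range t) = ⨅ j, t j := sInf_range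
      rw [← this, ← hj0]
      exact ht j0
    set m := min 1 (⨅ j, t j) with hm
    have hm_pos : 0 < m := lt_min one_pos hinf_pos
    have hP : 0 < ∏ j, φ j (t j) :=
      Finset.prod_pos fun j _ => (hB j).pos _ (ht j)
    have hKlb : c * m ≤ Kfun ι (Fin.cons 1 t) a := by
      refine le_csInf ⟨_, w, hw, rfl⟩ ?_
      rintro x ⟨v, hv, rfl⟩
      have h1 : ∀ j : Fin (n + 1), m * ‖v j‖ ≤ (Fin.cons 1 t : Fin (n + 1) → ℝ) j * ‖v j‖ := by
        intro j
        refine mul_le_mul_of_nonneg_right ?_ (norm_nonneg _)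
        refine Fin.cases ?_ ?_ j
        · simp only [Fin.cons_zero]
          rw [hm]; exact min_le_left _ _
        · intro i
          simp only [Fin.cons_succ]
          exact le_trans (min_le_right _ _) (ciInf_le hbdd i)
      calc c * m = m * c := mul_comm _ _
        _ ≤ m * ∑ j, ‖v j‖ := mul_le_mul_of_nonneg_left (hclb v hv) hm_pos.le
        _ = ∑ j, m * ‖v j‖ := Finset.mul_sum _ _ _
        _ ≤ ∑ j, (Fin.cons 1 t : Fin (n + 1) → ℝ) j * ‖v j‖ := Finset.sum_le_sum fun j _ => h1 j
    have hKnn : 0 ≤ Kfun ι (Fin.cons 1 t) a :=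
      le_trans (by positivity) hKlb
    simp only [Pi.smul_apply, smul_eq_mul]
    rw [Real.norm_of_nonneg (div_nonneg hm_pos.le hP.le),
      Real.norm_of_nonneg (by positivity)]
    rw [← mul_div_assoc]
    gcongr
    calc m = c⁻¹ * (c * m) := by field_simp
      _ ≤ c⁻¹ * Kfun ι (Fin.cons 1 t) a :=
        mul_le_mul_of_nonneg_left hKlb (inv_nonneg.mpr hcpos.le)
  -- Step 3: a.e. estimate and conclusion
  have hS : MeasurableSet {t : Fin n → ℝ | ∀ j, 0 < t j} := by
    have : {t : Fin n → ℝ | ∀ j, 0 < t j} = ⋂ j, {t | 0 < t j} := by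
      ext t; simp
    rw [this]
    exact MeasurableSet.iInter fun j =>
      measurableSet_lt measurable_const (measurable_pi_apply j)
  have h1 : ∀ᵐ t ∂((MeasureTheory.Measure.pi fun _ => (volume : Measure ℝ)).restrict
      {t : Fin n → ℝ | ∀ j, 0 < t j}),
      ‖min 1 (⨅ j, t j) / ∏ j, φ j (t j)‖ ≤
        ‖((c⁻¹ : ℝ) • fun s : Fin n → ℝ => Kfun ι (Fin.cons 1 s) a / ∏ j, φ j (s j)) t‖ :=
    ae_restrict_of_forall_mem hS key
  have hae : ∀ᵐ t ∂(haarMeas n),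
      ‖min 1 (⨅ j, t j) / ∏ j, φ j (t j)‖ ≤
        ‖((c⁻¹ : ℝ) • fun s : Fin n → ℝ => Kfun ι (Fin.cons 1 s) a / ∏ j, φ j (s j)) t‖ := by
    rw [haarMeas]
    exact h1.filter_mono (MeasureTheory.withDensity_absolutelyContinuous _ _).ae_le
  refine hH1 ?_
  unfold CondH1
  calc eLpNorm (fun t : Fin n → ℝ => min 1 (⨅ j, t j) / ∏ j, φ j (t j)) p (haarMeas n)
      ≤ eLpNorm ((c⁻¹ : ℝ) • fun s : Fin n → ℝ =>
          Kfun ι (Fin.cons 1 s) a / ∏ j, φ j (s j)) p (haarMeas n) :=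
        eLpNorm_mono_ae hae
    _ = (‖(c⁻¹ : ℝ)‖₊ : ℝ≥0∞) * Knorm ι φ p a := by
        rw [Knorm]; exact eLpNorm_const_smul _ _ _ _
    _ < ⊤ := ENNReal.mul_lt_top ENNReal.coe_lt_top hK
end

section
/- Power theorem: for p ∈ [1,∞], q > 0 and Boyd functions φ₁,...,φₙ satisfying (𝓗₂), one has K_p^{φ₁,...,φₙ}(A^{(q)}) = (K_{pq}^{(φ₁)_q,...,(φₙ)_q}(A))^{(q)} with equivalence of quasi-norms, where (φ)_q(t)=φ(t^q)^{1/q} and A^{(q)} = (A₀^{(q)},...,Aₙ^{(q)}) with ‖·‖_{Aⱼ^{(q)}} = ‖·‖_{Aⱼ}^q. -/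
open Real Set MeasureTheory
open scoped ENNReal

/-- The multi-parameter K-functional of the power tuple `A^{(q)}`, whose quasi-norms are
`‖·‖^q`. -/
noncomputable def KfunPow {𝒜 : Type*} [AddCommGroup 𝒜] [Module ℝ 𝒜] [TopologicalSpace 𝒜]
    {m : ℕ} {E : Fin m → Type*} [∀ j, NormedAddCommGroup (E j)] [∀ j, NormedSpace ℝ (E j)]
    (ι : ∀ j, E j →L[ℝ] 𝒜) (q : ℝ) (t : Fin m → ℝ) (a : 𝒜) : ℝ :=
  sInf {x : ℝ | ∃ v : ∀ j, E j, a = ∑ j, ι j (v j) ∧ x = ∑ j, t j * ‖v j‖ ^ q}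

/-- The interpolation quasi-norm of `K_p^{φ₁,…,φₙ}(A^{(q)})`. -/
noncomputable def KnormPow {𝒜 : Type*} [AddCommGroup 𝒜] [Module ℝ 𝒜] [TopologicalSpace 𝒜]
    {n : ℕ} {E : Fin (n + 1) → Type*} [∀ j, NormedAddCommGroup (E j)]
    [∀ j, NormedSpace ℝ (E j)]
    (ι : ∀ j, E j →L[ℝ] 𝒜) (q : ℝ) (φ : Fin n → ℝ → ℝ) (p : ℝ≥0∞) (a : 𝒜) : ℝ≥0∞ :=
  eLpNorm (fun t : Fin n → ℝ => KfunPow ι q (Fin.cons 1 t) a / ∏ j, φ j (t j)) p (haarMeas n)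


section auxiliary

lemma aux_sum_rpow_le {m : ℕ} {q : ℝ} (hq : 0 < q) (x : Fin m → ℝ) (hx : ∀ j, 0 ≤ x j) :
    ∑ j, x j ^ q ≤ m * (∑ j, x j) ^ q := by
  have hs : ∀ j, x j ≤ ∑ i, x i := fun j =>
    Finset.single_le_sum (f := x) (fun i _ => hx i) (Finset.mem_univ j)
  calc ∑ j, x j ^ q ≤ ∑ _j : Fin m, (∑ i, x i) ^ q :=
        Finset.sum_le_sum fun j _ => Real.rpow_le_rpow (hx j) (hs j) hq.le
    _ = m * (∑ i, x i) ^ q := by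
        simp [Finset.sum_const, nsmul_eq_mul]

lemma aux_rpow_sum_le {m : ℕ} {q : ℝ} (hq : 0 < q) (x : Fin m → ℝ) (hx : ∀ j, 0 ≤ x j) :
    (∑ j, x j) ^ q ≤ (m : ℝ) ^ q * ∑ j, x j ^ q := by
  set M := ∑ j, x j ^ q with hM
  have hM0 : 0 ≤ M := Finset.sum_nonneg fun i _ => Real.rpow_nonneg (hx i) q
  have hxj : ∀ j, x j ≤ M ^ q⁻¹ := by
    intro j
    have h1 : x j ^ q ≤ M :=
      Finset.single_le_sum (f := fun i => x i ^ q) (fun i _ => Real.rpow_nonneg (hx i) q)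
        (Finset.mem_univ j)
    have h2 : (x j ^ q) ^ q⁻¹ ≤ M ^ q⁻¹ :=
      Real.rpow_le_rpow (Real.rpow_nonneg (hx j) q) h1 (inv_nonneg.2 hq.le)
    rwa [Real.rpow_rpow_inv (hx j) hq.ne'] at h2
  calc (∑ j, x j) ^ q ≤ (∑ _j : Fin m, M ^ q⁻¹) ^ q := by
        apply Real.rpow_le_rpow (Finset.sum_nonneg fun i _ => hx i)
          (Finset.sum_le_sum fun j _ => hxj j) hq.le
    _ = ((m : ℝ) * M ^ q⁻¹) ^ q := by simp [Finset.sum_const, nsmul_eq_mul]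
    _ = (m : ℝ) ^ q * M := by
        rw [Real.mul_rpow (by positivity) (Real.rpow_nonneg hM0 _),
          Real.rpow_inv_rpow hM0 hq.ne']

section kfun
variable {𝒜 : Type*} [AddCommGroup 𝒜] [Module ℝ 𝒜] [TopologicalSpace 𝒜]
  {m : ℕ} {E : Fin m → Type*} [∀ j, NormedAddCommGroup (E j)] [∀ j, NormedSpace ℝ (E j)]
  (ι : ∀ j, E j →L[ℝ] 𝒜)

lemma kfun_nonneg {s : Fin m → ℝ} (hs : ∀ j, 0 ≤ s j) (a : 𝒜) : 0 ≤ Kfun ι s a := by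
  apply Real.sInf_nonneg
  rintro x ⟨v, -, rfl⟩
  exact Finset.sum_nonneg fun j _ => mul_nonneg (hs j) (norm_nonneg _)

lemma kfunPow_nonneg {q : ℝ} {s : Fin m → ℝ} (hs : ∀ j, 0 ≤ s j) (a : 𝒜) :
    0 ≤ KfunPow ι q s a := by
  apply Real.sInf_nonneg
  rintro x ⟨v, -, rfl⟩
  exact Finset.sum_nonneg fun j _ => mul_nonneg (hs j) (Real.rpow_nonneg (norm_nonneg _) q)

lemma kfunPow_le_kfun_rpow {q : ℝ} (hq : 0 < q) {s : Fin m → ℝ} (hs : ∀ j, 0 < s j) (a : 𝒜) :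
    KfunPow ι q (fun j => s j ^ q) a ≤ m * (Kfun ι s a) ^ q := by
  set S := {x : ℝ | ∃ v : ∀ j, E j, a = ∑ j, ι j (v j) ∧ x = ∑ j, s j * ‖v j‖} with hS
  set S' := {x : ℝ | ∃ v : ∀ j, E j, a = ∑ j, ι j (v j) ∧ x = ∑ j, (s j ^ q) * ‖v j‖ ^ q}
    with hS'
  by_cases hne : ∃ v : ∀ j, E j, a = ∑ j, ι j (v j)
  · have hSne : S.Nonempty := ⟨_, hne.choose, hne.choose_spec, rfl⟩
    have hS'bdd : BddBelow S' := by
      refine ⟨0, ?_⟩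
      rintro x ⟨v, -, rfl⟩
      exact Finset.sum_nonneg fun j _ =>
        mul_nonneg (Real.rpow_nonneg (hs j).le q) (Real.rpow_nonneg (norm_nonneg _) q)
    have hS'0 : 0 ≤ sInf S' := kfunPow_nonneg ι (fun j => Real.rpow_nonneg (hs j).le q) a
    have key : ∀ y ∈ S, sInf S' ≤ m * y ^ q := by
      rintro y ⟨v, hv, rfl⟩
      have hmem : (∑ j, (s j ^ q) * ‖v j‖ ^ q) ∈ S' := ⟨v, hv, rfl⟩
      refine (csInf_le hS'bdd hmem).trans ?_
      have : ∀ j, (s j ^ q) * ‖v j‖ ^ q = (s j * ‖v j‖) ^ q := fun j =>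
        (Real.mul_rpow (hs j).le (norm_nonneg _)).symm
      rw [Finset.sum_congr rfl fun j _ => this j]
      exact aux_sum_rpow_le hq _ fun j => mul_nonneg (hs j).le (norm_nonneg _)
    by_cases hm : m = 0
    · subst hm
      obtain ⟨y, hy⟩ := hSne
      have := key y hy
      show sInf S' ≤ _
      simpa using this.trans (by simp)
    have hmpos : (0 : ℝ) < m := by positivity
    have h2 : ∀ y ∈ S, (sInf S' / m) ^ q⁻¹ ≤ y := by
      intro y hy
      have hy0 : 0 ≤ y := by
        obtain ⟨v, -, rfl⟩ := hy
        exact Finset.sum_nonneg fun j _ => mul_nonneg (hs j).le (norm_nonneg _)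
      have h3 : sInf S' / m ≤ y ^ q := (div_le_iff₀' hmpos).2 (key y hy)
      have h4 : (sInf S' / m) ^ q⁻¹ ≤ (y ^ q) ^ q⁻¹ :=
        Real.rpow_le_rpow (by positivity) h3 (inv_nonneg.2 hq.le)
      rwa [Real.rpow_rpow_inv hy0 hq.ne'] at h4
    have h5 : (sInf S' / m) ^ q⁻¹ ≤ sInf S := le_csInf hSne h2
    have h6 : sInf S' / m ≤ (sInf S) ^ q := by
      have := Real.rpow_le_rpow (Real.rpow_nonneg (by positivity) _) h5 hq.le
      rwa [Real.rpow_inv_rpow (by positivity) hq.ne'] at this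
    calc sInf S' = m * (sInf S' / m) := by field_simp
      _ ≤ m * (sInf S) ^ q := by nlinarith [h6, hmpos]
  · have hSe : S = ∅ := by
      ext x; simp only [hS, mem_setOf_eq, mem_empty_iff_false, iff_false]
      rintro ⟨v, hv, -⟩; exact hne ⟨v, hv⟩
    have hS'e : S' = ∅ := by
      ext x; simp only [hS', mem_setOf_eq, mem_empty_iff_false, iff_false]
      rintro ⟨v, hv, -⟩; exact hne ⟨v, hv⟩
    show sInf S' ≤ m * (sInf S) ^ q
    rw [hSe, hS'e, Real.sInf_empty, Real.zero_rpow hq.ne', mul_zero]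

lemma kfun_rpow_le_kfunPow {q : ℝ} (hq : 0 < q) {s : Fin m → ℝ} (hs : ∀ j, 0 < s j) (a : 𝒜) :
    (Kfun ι s a) ^ q ≤ (m : ℝ) ^ q * KfunPow ι q (fun j => s j ^ q) a := by
  set S := {x : ℝ | ∃ v : ∀ j, E j, a = ∑ j, ι j (v j) ∧ x = ∑ j, s j * ‖v j‖} with hS
  set S' := {x : ℝ | ∃ v : ∀ j, E j, a = ∑ j, ι j (v j) ∧ x = ∑ j, (s j ^ q) * ‖v j‖ ^ q}
    with hS'
  by_cases hne : ∃ v : ∀ j, E j, a = ∑ j, ι j (v j)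
  · have hS'ne : S'.Nonempty := ⟨_, hne.choose, hne.choose_spec, rfl⟩
    have hSbdd : BddBelow S := by
      refine ⟨0, ?_⟩
      rintro x ⟨v, -, rfl⟩
      exact Finset.sum_nonneg fun j _ => mul_nonneg (hs j).le (norm_nonneg _)
    by_cases hm : m = 0
    · subst hm
      -- a = 0, Kfun = sInf {0}?? handle: S = {0} since empty sums
      have : S = {0} := by
        ext x
        simp only [hS, mem_setOf_eq, mem_singleton_iff]
        constructor
        · rintro ⟨v, -, rfl⟩; simp
        · rintro rfl; exact ⟨hne.choose, hne.choose_spec, by simp⟩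
      show (sInf S) ^ q ≤ _
      rw [this, csInf_singleton, Real.zero_rpow hq.ne']
      simp [Real.zero_rpow hq.ne']
    have hmpos : (0 : ℝ) < m := by positivity
    have key : ∀ z ∈ S', (sInf S) ^ q / (m : ℝ) ^ q ≤ z := by
      rintro z ⟨v, hv, rfl⟩
      have h1 : sInf S ≤ ∑ j, s j * ‖v j‖ := csInf_le hSbdd ⟨v, hv, rfl⟩
      have h0 : 0 ≤ sInf S := kfun_nonneg ι (fun j => (hs j).le) a
      have h2 : (sInf S) ^ q ≤ (∑ j, s j * ‖v j‖) ^ q := Real.rpow_le_rpow h0 h1 hq.le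
      have h3 : (∑ j, s j * ‖v j‖) ^ q ≤ (m : ℝ) ^ q * ∑ j, (s j * ‖v j‖) ^ q :=
        aux_rpow_sum_le hq _ fun j => mul_nonneg (hs j).le (norm_nonneg _)
      have h4 : (∑ j, (s j * ‖v j‖) ^ q) = ∑ j, (s j ^ q) * ‖v j‖ ^ q :=
        Finset.sum_congr rfl fun j _ => Real.mul_rpow (hs j).le (norm_nonneg _)
      rw [div_le_iff₀ (by positivity)]
      calc (sInf S) ^ q ≤ (∑ j, s j * ‖v j‖) ^ q := h2
        _ ≤ (m : ℝ) ^ q * ∑ j, (s j ^ q) * ‖v j‖ ^ q := by rw [← h4]; exact h3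
        _ = (∑ j, (s j ^ q) * ‖v j‖ ^ q) * (m:ℝ) ^ q := mul_comm _ _
    have h5 : (sInf S) ^ q / (m : ℝ) ^ q ≤ sInf S' := le_csInf hS'ne key
    calc (sInf S) ^ q = (m:ℝ)^q * ((sInf S) ^ q / (m:ℝ)^q) := by
          field_simp
      _ ≤ (m:ℝ)^q * sInf S' := by
          have hmq : (0:ℝ) < (m:ℝ)^q := by positivity
          nlinarith [h5, hmq]
  · have hSe : S = ∅ := by
      ext x; simp only [hS, mem_setOf_eq, mem_empty_iff_false, iff_false]
      rintro ⟨v, hv, -⟩; exact hne ⟨v, hv⟩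
    have hS'e : S' = ∅ := by
      ext x; simp only [hS', mem_setOf_eq, mem_empty_iff_false, iff_false]
      rintro ⟨v, hv, -⟩; exact hne ⟨v, hv⟩
    show (sInf S) ^ q ≤ (m:ℝ)^q * sInf S'
    rw [hSe, hS'e, Real.sInf_empty, Real.zero_rpow hq.ne', mul_zero]

end kfun

lemma det_pi_smul_proj {n : ℕ} (d : Fin n → ℝ) :
    (ContinuousLinearMap.pi fun j =>
      d j • ContinuousLinearMap.proj (R := ℝ) (φ := fun _ : Fin n => ℝ) j).det = ∏ j, d j := by
  rw [ContinuousLinearMap.det]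
  rw [← LinearMap.det_toMatrix (Pi.basisFun ℝ (Fin n))]
  have : (LinearMap.toMatrix (Pi.basisFun ℝ (Fin n)) (Pi.basisFun ℝ (Fin n))
      ((ContinuousLinearMap.pi fun j =>
        d j • ContinuousLinearMap.proj (R := ℝ) (φ := fun _ : Fin n => ℝ) j) :
        (Fin n → ℝ) →ₗ[ℝ] (Fin n → ℝ))) = Matrix.diagonal d := by
    ext i j
    simp [LinearMap.toMatrix_apply, Matrix.diagonal, Pi.single_apply, eq_comm]
  rw [this, Matrix.det_diagonal]

section haar
variable {n : ℕ}

def orthant (n : ℕ) : Set (Fin n → ℝ) := {t | ∀ j, 0 < t j}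

lemma measurableSet_orthant_s18 : MeasurableSet (orthant n) := by
  have : orthant n = ⋂ j, (fun t : Fin n → ℝ => t j) ⁻¹' Ioi 0 := by
    ext t; simp [orthant, Set.mem_iInter]
  rw [this]
  exact MeasurableSet.iInter fun j => measurable_pi_apply j measurableSet_Ioi

lemma measurable_rpow_pi (e : ℝ) :
    Measurable (fun s : Fin n → ℝ => fun j => s j ^ e) :=
  measurable_pi_lambda _ fun j => (measurable_pi_apply j).pow measurable_const

lemma haarMeas_compl_orthant : haarMeas n (orthant n)ᶜ = 0 := by
  rw [haarMeas, withDensity_apply _ measurableSet_orthant_s18.compl,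
    Measure.restrict_restrict measurableSet_orthant_s18.compl]
  simp [orthant]

lemma ae_orthant : ∀ᵐ t ∂haarMeas n, ∀ j, 0 < t j := by
  rw [MeasureTheory.ae_iff]
  exact haarMeas_compl_orthant

lemma haarMeas_apply_rpow_preimage {e : ℝ} (he : 0 < e) {A : Set (Fin n → ℝ)}
    (hA : MeasurableSet A) :
    haarMeas n A
      = ENNReal.ofReal e ^ n * haarMeas n ((fun s : Fin n → ℝ => fun j => s j ^ e) ⁻¹' A) := by
  set Φ : (Fin n → ℝ) → (Fin n → ℝ) := fun s => fun j => s j ^ e with hΦdef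
  set ρ : (Fin n → ℝ) → ℝ≥0∞ := fun t => ENNReal.ofReal (∏ j, (t j)⁻¹) with hρ
  have hO := measurableSet_orthant_s18 (n := n)
  have hpi : (Measure.pi fun _ : Fin n => (volume : Measure ℝ)) = volume := volume_pi.symm
  have hap : ∀ B : Set (Fin n → ℝ), MeasurableSet B →
      haarMeas n B = ∫⁻ t in orthant n, B.indicator ρ t ∂volume := by
    intro B hB
    rw [haarMeas, withDensity_apply _ hB, Measure.restrict_restrict hB, hpi,
      lintegral_indicator hB, Measure.restrict_restrict hB]
    rfl
  -- change of variables
  have hderiv : ∀ x ∈ orthant n, HasFDerivWithinAt Φ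
      (ContinuousLinearMap.pi fun j => (e * x j ^ (e - 1)) •
        ContinuousLinearMap.proj (R := ℝ) (φ := fun _ : Fin n => ℝ) j) (orthant n) x := by
    intro x hx
    apply HasFDerivAt.hasFDerivWithinAt
    apply hasFDerivAt_pi.2
    intro i
    have h1 : HasDerivAt (fun y : ℝ => y ^ e) (e * x i ^ (e - 1)) (x i) :=
      Real.hasDerivAt_rpow_const (Or.inl (hx i).ne')
    have h2 : HasFDerivAt (fun s : Fin n → ℝ => s i)
        (ContinuousLinearMap.proj (R := ℝ) (φ := fun _ : Fin n => ℝ) i) x :=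
      (ContinuousLinearMap.proj (R := ℝ) (φ := fun _ : Fin n => ℝ) i).hasFDerivAt
    exact h1.comp_hasFDerivAt x h2
  have hinj : InjOn Φ (orthant n) := by
    intro x hx y hy hxy
    funext j
    have := congrFun hxy j
    have h1 : (x j ^ e) ^ e⁻¹ = (y j ^ e) ^ e⁻¹ := by
      simp only [hΦdef] at this; rw [this]
    rwa [Real.rpow_rpow_inv (hx j).le he.ne', Real.rpow_rpow_inv (hy j).le he.ne'] at h1
  have himg : Φ '' orthant n = orthant n := by
    ext y
    constructor
    · rintro ⟨x, hx, rfl⟩ j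
      exact Real.rpow_pos_of_pos (hx j) e
    · intro hy
      refine ⟨fun j => y j ^ e⁻¹, fun j => Real.rpow_pos_of_pos (hy j) _, funext fun j => ?_⟩
      exact Real.rpow_inv_rpow (hy j).le he.ne'
  have hcv := lintegral_image_eq_lintegral_abs_det_fderiv_mul volume hO hderiv hinj
    (A.indicator ρ)
  rw [himg] at hcv
  have hpt : ∀ᵐ x ∂(volume : Measure (Fin n → ℝ)), x ∈ orthant n →
      ENNReal.ofReal |(ContinuousLinearMap.pi fun j => (e * x j ^ (e - 1)) •
          ContinuousLinearMap.proj (R := ℝ) (φ := fun _ : Fin n => ℝ) j).det|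
        * A.indicator ρ (Φ x)
      = ENNReal.ofReal e ^ n * (Φ ⁻¹' A).indicator ρ x := by
    refine Filter.Eventually.of_forall fun x hx => ?_
    rw [det_pi_smul_proj]
    by_cases hmem : Φ x ∈ A
    · have hmem' : x ∈ Φ ⁻¹' A := hmem
      rw [Set.indicator_of_mem hmem, Set.indicator_of_mem hmem']
      have hpos : ∀ j, 0 < e * x j ^ (e - 1) := fun j =>
        mul_pos he (Real.rpow_pos_of_pos (hx j) _)
      have habs : |∏ j, e * x j ^ (e - 1)| = ∏ j, e * x j ^ (e - 1) :=
        abs_of_pos (Finset.prod_pos fun j _ => hpos j)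
      rw [habs, hρ]
      have hcomb : (∏ j, e * x j ^ (e - 1)) * (∏ j, ((Φ x) j)⁻¹)
          = e ^ n * ∏ j, (x j)⁻¹ := by
        rw [← Finset.prod_mul_distrib]
        have : ∀ j, (e * x j ^ (e - 1)) * ((Φ x) j)⁻¹ = e * (x j)⁻¹ := by
          intro j
          have hxj := hx j
          have hne : x j ^ e ≠ 0 := (Real.rpow_pos_of_pos hxj e).ne'
          have : x j ^ (e - 1) = x j ^ e / x j := by
            rw [Real.rpow_sub hxj, Real.rpow_one]
          rw [hΦdef]
          simp only []
          rw [this]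
          field_simp
        rw [Finset.prod_congr rfl fun j _ => this j, Finset.prod_mul_distrib]
        simp [Finset.prod_const]
      rw [← ENNReal.ofReal_mul (Finset.prod_nonneg fun j _ => (hpos j).le), hcomb,
        ENNReal.ofReal_mul (by positivity), ENNReal.ofReal_pow he.le]
    · have hmem' : x ∉ Φ ⁻¹' A := hmem
      rw [Set.indicator_of_notMem hmem, Set.indicator_of_notMem hmem']
      simp
  rw [hap A hA, hcv, setLIntegral_congr_fun_ae hO hpt, lintegral_const_mul'
    _ _ (by simp : (ENNReal.ofReal e ^ n : ℝ≥0∞) ≠ ⊤),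
    hap _ (hA.preimage (measurable_rpow_pi e))]

lemma map_rpow_haarMeas {e : ℝ} (he : 0 < e) :
    Measure.map (fun s : Fin n → ℝ => fun j => s j ^ e) (haarMeas n)
      = ((ENNReal.ofReal e)⁻¹) ^ n • haarMeas n := by
  ext A hA
  rw [Measure.map_apply (measurable_rpow_pi e) hA, Measure.smul_apply, smul_eq_mul]
  rw [haarMeas_apply_rpow_preimage he hA, ← mul_assoc, ← mul_pow,
    ENNReal.inv_mul_cancel (by simpa using he) ENNReal.ofReal_ne_top, one_pow, one_mul]

lemma lintegral_haar_le_rpow_sub (F : (Fin n → ℝ) → ℝ≥0∞) {e : ℝ} (he : 0 < e) :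
    ∫⁻ t, F t ∂haarMeas n ≤ ENNReal.ofReal e ^ n * ∫⁻ s, F (fun j => s j ^ e) ∂haarMeas n := by
  have h1 := lintegral_map_le (μ := haarMeas n) F (fun s : Fin n → ℝ => fun j => s j ^ e)
  rw [map_rpow_haarMeas he, lintegral_smul_measure] at h1
  have hne : (ENNReal.ofReal e : ℝ≥0∞) ≠ 0 := (ENNReal.ofReal_pos.2 he).ne'
  calc ∫⁻ t, F t ∂haarMeas n
      = ENNReal.ofReal e ^ n * ((ENNReal.ofReal e)⁻¹ ^ n * ∫⁻ t, F t ∂haarMeas n) := by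
        rw [← mul_assoc, ← mul_pow, ENNReal.mul_inv_cancel hne ENNReal.ofReal_ne_top,
          one_pow, one_mul]
    _ ≤ _ := mul_le_mul_right h1 _

lemma essSup_haar_comp_rpow_le (F : (Fin n → ℝ) → ℝ≥0∞) {e : ℝ} (he : 0 < e) :
    essSup (fun t => F (fun j => t j ^ e)) (haarMeas n) ≤ essSup F (haarMeas n) := by
  have h1 : essSup (F ∘ (fun s : Fin n → ℝ => fun j => s j ^ e)) (haarMeas n)
      ≤ essSup F (Measure.map (fun s : Fin n → ℝ => fun j => s j ^ e) (haarMeas n)) :=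
    essSup_comp_le_essSup_map_measure (measurable_rpow_pi e).aemeasurable
  rw [map_rpow_haarMeas he, essSup_ennreal_smul_measure
    (pow_ne_zero _ (ENNReal.inv_ne_zero.2 ENNReal.ofReal_ne_top))] at h1
  exact h1
end haar

section point
variable {𝒜 : Type*} [AddCommGroup 𝒜] [Module ℝ 𝒜] [TopologicalSpace 𝒜]
  {n : ℕ} {E : Fin (n + 1) → Type*} [∀ j, NormedAddCommGroup (E j)]
  [∀ j, NormedSpace ℝ (E j)] (ι : ∀ j, E j →L[ℝ] 𝒜)

lemma point_le {φ : Fin n → ℝ → ℝ} (hφ : ∀ j t, 0 < t → 0 < φ j t) {q : ℝ} (hq : 0 < q)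
    (a : 𝒜) {s : Fin n → ℝ} (hs : ∀ j, 0 < s j) :
    (‖KfunPow ι q (Fin.cons 1 fun j => s j ^ q) a / ∏ j, φ j (s j ^ q)‖₊ : ℝ≥0∞)
      ≤ ENNReal.ofReal ((n + 1 : ℕ) : ℝ) *
        (‖Kfun ι (Fin.cons 1 s) a / ∏ j, φ j (s j ^ q) ^ q⁻¹‖₊ : ℝ≥0∞) ^ q := by
  have hcons : ∀ i, 0 < (Fin.cons (1 : ℝ) s : Fin (n + 1) → ℝ) i := fun i => Fin.cases (motive := fun i : Fin (n + 1) => 0 < (Fin.cons (1 : ℝ) s : Fin (n + 1) → ℝ) i) (by simp) (fun j => by simpa using hs j) i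
  have hconseq : (Fin.cons (1 : ℝ) (fun j => s j ^ q)) = fun i => ((Fin.cons (1 : ℝ) s : Fin (n + 1) → ℝ) i) ^ q := by
    funext i
    refine Fin.cases ?_ (fun j => ?_) i
    · simp [Real.one_rpow]
    · simp
  set N := Kfun ι (Fin.cons 1 s) a with hN
  set P := KfunPow ι q (Fin.cons 1 fun j => s j ^ q) a with hPdef
  have hN0 : 0 ≤ N := kfun_nonneg ι (fun i => (hcons i).le) a
  have hP0 : 0 ≤ P := by
    refine kfunPow_nonneg ι (fun i => ?_) a
    refine Fin.cases ?_ (fun j => ?_) i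
    · exact zero_le_one
    · simp only [Fin.cons_succ]
      exact (Real.rpow_pos_of_pos (hs j) q).le
  have hcmp1 : P ≤ ((n + 1 : ℕ) : ℝ) * N ^ q := by
    rw [hPdef, hconseq]
    exact kfunPow_le_kfun_rpow ι hq hcons a
  set D := ∏ j, φ j (s j ^ q) ^ q⁻¹ with hD
  have hφpos : ∀ j, 0 < φ j (s j ^ q) := fun j => hφ j _ (Real.rpow_pos_of_pos (hs j) q)
  have hDpos : 0 < D := Finset.prod_pos fun j _ => Real.rpow_pos_of_pos (hφpos j) _
  have hDq : D ^ q = ∏ j, φ j (s j ^ q) := by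
    rw [hD, Real.finset_prod_rpow _ _ (fun j _ => (hφpos j).le),
      Real.rpow_inv_rpow (Finset.prod_nonneg fun j _ => (hφpos j).le) hq.ne']
  rw [← hDq]
  have key1 : P / D ^ q ≤ ((n + 1 : ℕ) : ℝ) * (N / D) ^ q := by
    calc P / D ^ q ≤ (((n + 1 : ℕ) : ℝ) * N ^ q) / D ^ q := by
          exact (div_le_div_iff_of_pos_right (by positivity)).2 hcmp1
      _ = ((n + 1 : ℕ) : ℝ) * (N ^ q / D ^ q) := mul_div_assoc _ _ _
      _ = ((n + 1 : ℕ) : ℝ) * (N / D) ^ q := by rw [Real.div_rpow hN0 hDpos.le]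
  have hg10 : 0 ≤ P / D ^ q := div_nonneg hP0 (Real.rpow_nonneg hDpos.le q)
  have hg20 : 0 ≤ N / D := div_nonneg hN0 hDpos.le
  simp only [← enorm_eq_nnnorm]
  rw [Real.enorm_eq_ofReal hg10, Real.enorm_eq_ofReal hg20]
  calc ENNReal.ofReal (P / D ^ q) ≤ ENNReal.ofReal (((n + 1 : ℕ) : ℝ) * (N / D) ^ q) :=
        ENNReal.ofReal_le_ofReal key1
    _ = ENNReal.ofReal ((n + 1 : ℕ) : ℝ) * ENNReal.ofReal (N / D) ^ q := by
        rw [ENNReal.ofReal_mul (by positivity), ENNReal.ofReal_rpow_of_nonneg hg20 hq.le]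

lemma point_ge {φ : Fin n → ℝ → ℝ} (hφ : ∀ j t, 0 < t → 0 < φ j t) {q : ℝ} (hq : 0 < q)
    (a : 𝒜) {s : Fin n → ℝ} (hs : ∀ j, 0 < s j) :
    (‖Kfun ι (Fin.cons 1 s) a / ∏ j, φ j (s j ^ q) ^ q⁻¹‖₊ : ℝ≥0∞) ^ q
      ≤ ENNReal.ofReal (((n + 1 : ℕ) : ℝ) ^ q) *
        (‖KfunPow ι q (Fin.cons 1 fun j => s j ^ q) a / ∏ j, φ j (s j ^ q)‖₊ : ℝ≥0∞) := by
  have hcons : ∀ i, 0 < (Fin.cons (1 : ℝ) s : Fin (n + 1) → ℝ) i := fun i => Fin.cases (motive := fun i : Fin (n + 1) => 0 < (Fin.cons (1 : ℝ) s : Fin (n + 1) → ℝ) i) (by simp) (fun j => by simpa using hs j) i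
  have hconseq : (Fin.cons (1 : ℝ) (fun j => s j ^ q)) = fun i => ((Fin.cons (1 : ℝ) s : Fin (n + 1) → ℝ) i) ^ q := by
    funext i
    refine Fin.cases ?_ (fun j => ?_) i
    · simp [Real.one_rpow]
    · simp
  set N := Kfun ι (Fin.cons 1 s) a with hN
  set P := KfunPow ι q (Fin.cons 1 fun j => s j ^ q) a with hPdef
  have hN0 : 0 ≤ N := kfun_nonneg ι (fun i => (hcons i).le) a
  have hP0 : 0 ≤ P := by
    refine kfunPow_nonneg ι (fun i => ?_) a
    refine Fin.cases ?_ (fun j => ?_) i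
    · exact zero_le_one
    · simp only [Fin.cons_succ]
      exact (Real.rpow_pos_of_pos (hs j) q).le
  have hcmp2 : N ^ q ≤ ((n + 1 : ℕ) : ℝ) ^ q * P := by
    rw [hPdef, hconseq]
    exact kfun_rpow_le_kfunPow ι hq hcons a
  set D := ∏ j, φ j (s j ^ q) ^ q⁻¹ with hD
  have hφpos : ∀ j, 0 < φ j (s j ^ q) := fun j => hφ j _ (Real.rpow_pos_of_pos (hs j) q)
  have hDpos : 0 < D := Finset.prod_pos fun j _ => Real.rpow_pos_of_pos (hφpos j) _
  have hDq : D ^ q = ∏ j, φ j (s j ^ q) := by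
    rw [hD, Real.finset_prod_rpow _ _ (fun j _ => (hφpos j).le),
      Real.rpow_inv_rpow (Finset.prod_nonneg fun j _ => (hφpos j).le) hq.ne']
  rw [← hDq]
  have key2 : (N / D) ^ q ≤ ((n + 1 : ℕ) : ℝ) ^ q * (P / D ^ q) := by
    rw [Real.div_rpow hN0 hDpos.le]
    calc N ^ q / D ^ q ≤ (((n + 1 : ℕ) : ℝ) ^ q * P) / D ^ q := by
          exact (div_le_div_iff_of_pos_right (by positivity)).2 hcmp2
      _ = ((n + 1 : ℕ) : ℝ) ^ q * (P / D ^ q) := mul_div_assoc _ _ _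
  have hg10 : 0 ≤ P / D ^ q := div_nonneg hP0 (Real.rpow_nonneg hDpos.le q)
  have hg20 : 0 ≤ N / D := div_nonneg hN0 hDpos.le
  simp only [← enorm_eq_nnnorm]
  rw [Real.enorm_eq_ofReal hg10, Real.enorm_eq_ofReal hg20,
    ENNReal.ofReal_rpow_of_nonneg hg20 hq.le]
  calc ENNReal.ofReal ((N / D) ^ q)
      ≤ ENNReal.ofReal (((n + 1 : ℕ) : ℝ) ^ q * (P / D ^ q)) := ENNReal.ofReal_le_ofReal key2
    _ = ENNReal.ofReal (((n + 1 : ℕ) : ℝ) ^ q) * ENNReal.ofReal (P / D ^ q) := by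
        rw [ENNReal.ofReal_mul (by positivity)]
lemma point_ge_t {φ : Fin n → ℝ → ℝ} (hφ : ∀ j t, 0 < t → 0 < φ j t) {q : ℝ} (hq : 0 < q)
    (a : 𝒜) {t : Fin n → ℝ} (ht : ∀ j, 0 < t j) :
    (‖Kfun ι (Fin.cons 1 fun j => t j ^ q⁻¹) a / ∏ j, φ j (t j) ^ q⁻¹‖₊ : ℝ≥0∞) ^ q
      ≤ ENNReal.ofReal (((n + 1 : ℕ) : ℝ) ^ q) *
        (‖KfunPow ι q (Fin.cons 1 t) a / ∏ j, φ j (t j)‖₊ : ℝ≥0∞) := by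
  have h : ∀ j : Fin n, ((t j ^ q⁻¹ : ℝ)) ^ q = t j := fun j =>
    Real.rpow_inv_rpow (ht j).le hq.ne'
  have key := point_ge ι hφ hq a (s := fun j => t j ^ q⁻¹)
    (fun j => Real.rpow_pos_of_pos (ht j) _)
  simp only [h] at key
  exact key
end point
end auxiliary

theorem power_theorem {𝒜 : Type*} [AddCommGroup 𝒜] [Module ℝ 𝒜]
    [TopologicalSpace 𝒜] [IsTopologicalAddGroup 𝒜] [ContinuousSMul ℝ 𝒜] [T2Space 𝒜]
    {n : ℕ} (hn : 0 < n) {E : Fin (n + 1) → Type*} [∀ j, NormedAddCommGroup (E j)]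
    [∀ j, NormedSpace ℝ (E j)] [∀ j, CompleteSpace (E j)]
    (ι : ∀ j, E j →L[ℝ] 𝒜)
    (φ : Fin n → ℝ → ℝ) (hB : ∀ j, IsBoyd (φ j))
    (hlow : ∀ j, 0 < lowerBoydIndex (φ j))
    (hup : ∀ j, upperBoydIndex (φ j) < 1)
    (p : ℝ≥0∞) (hp : 1 ≤ p) (q : ℝ) (hq : 0 < q) :
    ∃ C : ℝ≥0∞, 0 < C ∧ C < ⊤ ∧ ∀ a : 𝒜,
      KnormPow ι q φ p a ≤
        C * (Knorm ι (fun j t => φ j (t ^ q) ^ q⁻¹) (p * ENNReal.ofReal q) a) ^ q ∧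
      (Knorm ι (fun j t => φ j (t ^ q) ^ q⁻¹) (p * ENNReal.ofReal q) a) ^ q ≤
        C * KnormPow ι q φ p a := by
  classical
  have hφpos : ∀ j t, 0 < t → 0 < φ j t := fun j t ht => (hB j).pos t ht
  set c : ℝ≥0∞ := ENNReal.ofReal q with hcdef
  have hc0 : c ≠ 0 := (ENNReal.ofReal_pos.2 hq).ne'
  have hctop : c ≠ ⊤ := ENNReal.ofReal_ne_top
  set mR : ℝ := ((n + 1 : ℕ) : ℝ) with hmRdef
  have hmRpos : (0 : ℝ) < mR := by positivity
  have hp0 : p ≠ 0 := (lt_of_lt_of_le zero_lt_one hp).ne'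
  by_cases hptop : p = ⊤
  · -- p = ∞ case
    refine ⟨ENNReal.ofReal mR + ENNReal.ofReal (mR ^ q) + 1, ?_, ?_, ?_⟩
    · exact lt_of_lt_of_le zero_lt_one le_add_self
    · exact ENNReal.add_lt_top.2 ⟨ENNReal.add_lt_top.2
        ⟨ENNReal.ofReal_lt_top, ENNReal.ofReal_lt_top⟩, ENNReal.one_lt_top⟩
    intro a
    set g₁ : (Fin n → ℝ) → ℝ :=
      fun t => KfunPow ι q (Fin.cons 1 t) a / ∏ j, φ j (t j) with hg₁
    set g₂ : (Fin n → ℝ) → ℝ :=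
      fun t => Kfun ι (Fin.cons 1 t) a / ∏ j, φ j (t j ^ q) ^ q⁻¹ with hg₂
    set f₁ : (Fin n → ℝ) → ℝ≥0∞ := fun t => (‖g₁ t‖₊ : ℝ≥0∞) with hf₁
    set f₂ : (Fin n → ℝ) → ℝ≥0∞ := fun t => (‖g₂ t‖₊ : ℝ≥0∞) with hf₂
    have hpc : p * c = ⊤ := by rw [hptop]; exact ENNReal.top_mul hc0
    have hKP : KnormPow ι q φ p a = essSup f₁ (haarMeas n) := by
      rw [KnormPow, hptop, eLpNorm_exponent_top]; rfl
    have hK : Knorm ι (fun j t => φ j (t ^ q) ^ q⁻¹) (p * ENNReal.ofReal q) a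
        = essSup f₂ (haarMeas n) := by
      rw [Knorm, ← hcdef, hpc, eLpNorm_exponent_top]; rfl
    rw [hKP, hK]
    constructor
    · -- essSup f₁ ≤ C * (essSup f₂)^q
      have step1 : essSup f₁ (haarMeas n)
          = essSup (fun t => f₁ (fun j => (t j ^ q⁻¹) ^ q)) (haarMeas n) := by
        refine essSup_congr_ae ?_
        filter_upwards [ae_orthant] with t ht
        congr 1
        funext j
        rw [Real.rpow_inv_rpow (ht j).le hq.ne']
      have step2 : essSup (fun t => f₁ (fun j => (t j ^ q⁻¹) ^ q)) (haarMeas n)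
          ≤ essSup (fun t => ENNReal.ofReal mR * f₂ (fun j => t j ^ q⁻¹) ^ q) (haarMeas n) := by
        refine essSup_mono_ae ?_
        filter_upwards [ae_orthant] with t ht
        exact point_le ι hφpos hq a (fun j => Real.rpow_pos_of_pos (ht j) _)
      have step3 : essSup (fun t => ENNReal.ofReal mR * f₂ (fun j => t j ^ q⁻¹) ^ q) (haarMeas n)
          ≤ essSup (fun s => ENNReal.ofReal mR * f₂ s ^ q) (haarMeas n) :=
        essSup_haar_comp_rpow_le (fun s => ENNReal.ofReal mR * f₂ s ^ q) (inv_pos.2 hq)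
      have step4 : essSup (fun s => ENNReal.ofReal mR * f₂ s ^ q) (haarMeas n)
          ≤ ENNReal.ofReal mR * (essSup f₂ (haarMeas n)) ^ q := by
        refine essSup_le_of_ae_le _ ?_
        filter_upwards [ENNReal.ae_le_essSup f₂] with s hs
        exact mul_le_mul_right (ENNReal.rpow_le_rpow hs hq.le) _
      calc essSup f₁ (haarMeas n) ≤ ENNReal.ofReal mR * (essSup f₂ (haarMeas n)) ^ q :=
            step1.le.trans (step2.trans (step3.trans step4))
        _ ≤ _ := by
            apply mul_le_mul_left
            calc ENNReal.ofReal mR ≤ ENNReal.ofReal mR + ENNReal.ofReal (mR ^ q) := le_self_add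
              _ ≤ _ := le_self_add
    · -- (essSup f₂)^q ≤ C * essSup f₁
      set X := essSup (fun s => f₁ (fun j => s j ^ q)) (haarMeas n) with hX
      have hXle : X ≤ essSup f₁ (haarMeas n) := essSup_haar_comp_rpow_le f₁ hq
      have hb : essSup f₂ (haarMeas n) ≤ (ENNReal.ofReal (mR ^ q) * X) ^ q⁻¹ := by
        refine essSup_le_of_ae_le _ ?_
        filter_upwards [ae_orthant, ENNReal.ae_le_essSup (fun s => f₁ (fun j => s j ^ q))]
          with s hs hle
        have h1 : f₂ s ^ q ≤ ENNReal.ofReal (mR ^ q) * f₁ (fun j => s j ^ q) :=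
          point_ge ι hφpos hq a hs
        have h2 : f₂ s ^ q ≤ ENNReal.ofReal (mR ^ q) * X := h1.trans (mul_le_mul_right hle _)
        calc f₂ s = (f₂ s ^ q) ^ q⁻¹ := (ENNReal.rpow_rpow_inv hq.ne' _).symm
          _ ≤ (ENNReal.ofReal (mR ^ q) * X) ^ q⁻¹ :=
            ENNReal.rpow_le_rpow h2 (inv_nonneg.2 hq.le)
      calc (essSup f₂ (haarMeas n)) ^ q ≤ ((ENNReal.ofReal (mR ^ q) * X) ^ q⁻¹) ^ q :=
            ENNReal.rpow_le_rpow hb hq.le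
        _ = ENNReal.ofReal (mR ^ q) * X := ENNReal.rpow_inv_rpow hq.ne' _
        _ ≤ ENNReal.ofReal (mR ^ q) * essSup f₁ (haarMeas n) := mul_le_mul_right hXle _
        _ ≤ _ := by
            apply mul_le_mul_left
            calc ENNReal.ofReal (mR ^ q)
                ≤ ENNReal.ofReal mR + ENNReal.ofReal (mR ^ q) := le_add_self
              _ ≤ _ := le_self_add
  · -- finite p
    set r : ℝ := p.toReal with hrdef
    have hr : 0 < r := ENNReal.toReal_pos hp0 hptop
    have hpc0 : p * c ≠ 0 := mul_ne_zero hp0 hc0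
    have hpctop : p * c ≠ ⊤ := ENNReal.mul_ne_top hptop hctop
    have hrc : (p * c).toReal = r * q := by
      rw [ENNReal.toReal_mul, hcdef, ENNReal.toReal_ofReal hq.le]
    set C₁ : ℝ≥0∞ := (c ^ n) ^ (1 / r) * ENNReal.ofReal mR with hC₁
    set C₂ : ℝ≥0∞ := ((c⁻¹) ^ n) ^ (1 / r) * ENNReal.ofReal (mR ^ q) with hC₂
    have hC₁top : C₁ < ⊤ := by
      apply ENNReal.mul_lt_top ?_ ENNReal.ofReal_lt_top
      exact (ENNReal.rpow_lt_top_of_nonneg (by positivity) (by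
        exact ENNReal.pow_ne_top hctop))
    have hC₂top : C₂ < ⊤ := by
      apply ENNReal.mul_lt_top ?_ ENNReal.ofReal_lt_top
      refine ENNReal.rpow_lt_top_of_nonneg (by positivity) ?_
      exact ENNReal.pow_ne_top (ENNReal.inv_ne_top.2 hc0)
    refine ⟨C₁ + C₂ + 1, lt_of_lt_of_le zero_lt_one le_add_self,
      ENNReal.add_lt_top.2 ⟨ENNReal.add_lt_top.2 ⟨hC₁top, hC₂top⟩, ENNReal.one_lt_top⟩, ?_⟩
    intro a
    set g₁ : (Fin n → ℝ) → ℝ :=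
      fun t => KfunPow ι q (Fin.cons 1 t) a / ∏ j, φ j (t j) with hg₁
    set g₂ : (Fin n → ℝ) → ℝ :=
      fun t => Kfun ι (Fin.cons 1 t) a / ∏ j, φ j (t j ^ q) ^ q⁻¹ with hg₂
    set I := ∫⁻ t, (‖g₁ t‖₊ : ℝ≥0∞) ^ r ∂haarMeas n with hI
    set J := ∫⁻ s, (‖g₂ s‖₊ : ℝ≥0∞) ^ (r * q) ∂haarMeas n with hJ
    have hKP : KnormPow ι q φ p a = I ^ (1 / r) := by
      rw [KnormPow, eLpNorm_eq_lintegral_rpow_enorm_toReal hp0 hptop]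
      rfl
    have hK : Knorm ι (fun j t => φ j (t ^ q) ^ q⁻¹) (p * ENNReal.ofReal q) a
        = J ^ (1 / (r * q)) := by
      rw [Knorm, ← hcdef, eLpNorm_eq_lintegral_rpow_enorm_toReal hpc0 hpctop, hrc]
      rfl
    have hKq : (Knorm ι (fun j t => φ j (t ^ q) ^ q⁻¹) (p * ENNReal.ofReal q) a) ^ q
        = J ^ (1 / r) := by
      rw [hK, ← ENNReal.rpow_mul]
      congr 1
      field_simp
    have hrq : 0 < r * q := mul_pos hr hq
    constructor
    · -- direction 1
      have claimA : I ≤ c ^ n * (ENNReal.ofReal mR ^ r * J) := by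
        calc I ≤ c ^ n * ∫⁻ s, (‖g₁ (fun j => s j ^ q)‖₊ : ℝ≥0∞) ^ r ∂haarMeas n :=
              lintegral_haar_le_rpow_sub (fun t => (‖g₁ t‖₊ : ℝ≥0∞) ^ r) hq
          _ ≤ c ^ n * ∫⁻ s, (ENNReal.ofReal mR * (‖g₂ s‖₊ : ℝ≥0∞) ^ q) ^ r ∂haarMeas n := by
              apply mul_le_mul_right
              apply lintegral_mono_ae
              filter_upwards [ae_orthant] with s hs
              exact ENNReal.rpow_le_rpow (point_le ι hφpos hq a hs) hr.le
          _ = c ^ n * (ENNReal.ofReal mR ^ r * J) := by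
              congr 1
              rw [hJ, ← lintegral_const_mul' _ _
                (ENNReal.rpow_ne_top_of_nonneg hr.le ENNReal.ofReal_ne_top)]
              congr 1
              funext s
              rw [ENNReal.mul_rpow_of_nonneg _ _ hr.le, ← ENNReal.rpow_mul, mul_comm q r]
      calc KnormPow ι q φ p a = I ^ (1 / r) := hKP
        _ ≤ (c ^ n * (ENNReal.ofReal mR ^ r * J)) ^ (1 / r) :=
            ENNReal.rpow_le_rpow claimA (by positivity)
        _ = C₁ * J ^ (1 / r) := by
            rw [ENNReal.mul_rpow_of_nonneg _ _ (by positivity : (0:ℝ) ≤ 1 / r),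
              ENNReal.mul_rpow_of_nonneg _ _ (by positivity : (0:ℝ) ≤ 1 / r),
              ← ENNReal.rpow_mul (ENNReal.ofReal mR), hC₁]
            rw [mul_one_div, div_self hr.ne', ENNReal.rpow_one, mul_assoc]
        _ ≤ (C₁ + C₂ + 1) * J ^ (1 / r) := by
            apply mul_le_mul_left
            exact le_self_add.trans le_self_add
        _ = (C₁ + C₂ + 1) * (Knorm ι (fun j t => φ j (t ^ q) ^ q⁻¹)
              (p * ENNReal.ofReal q) a) ^ q := by rw [hKq]
    · -- direction 2
      have claimB : J ≤ (c⁻¹) ^ n * (ENNReal.ofReal (mR ^ q) ^ r * I) := by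
        calc J ≤ ENNReal.ofReal q⁻¹ ^ n *
              ∫⁻ t, (‖g₂ (fun j => t j ^ q⁻¹)‖₊ : ℝ≥0∞) ^ (r * q) ∂haarMeas n :=
              lintegral_haar_le_rpow_sub (fun s => (‖g₂ s‖₊ : ℝ≥0∞) ^ (r * q)) (inv_pos.2 hq)
          _ = (c⁻¹) ^ n *
              ∫⁻ t, (‖g₂ (fun j => t j ^ q⁻¹)‖₊ : ℝ≥0∞) ^ (r * q) ∂haarMeas n := by
              rw [hcdef, ENNReal.ofReal_inv_of_pos hq]
          _ = (c⁻¹) ^ n * ∫⁻ t, (‖Kfun ι (Fin.cons 1 fun j => t j ^ q⁻¹) a /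
                ∏ j, φ j (t j) ^ q⁻¹‖₊ : ℝ≥0∞) ^ (r * q) ∂haarMeas n := by
              congr 1
              apply lintegral_congr_ae
              filter_upwards [ae_orthant] with t ht
              have h : ∀ j : Fin n, ((t j ^ q⁻¹ : ℝ)) ^ q = t j := fun j =>
                Real.rpow_inv_rpow (ht j).le hq.ne'
              simp only [hg₂, h]
          _ ≤ (c⁻¹) ^ n * ∫⁻ t, (ENNReal.ofReal (mR ^ q) * (‖g₁ t‖₊ : ℝ≥0∞)) ^ r ∂haarMeas n := by
              apply mul_le_mul_right
              apply lintegral_mono_ae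
              filter_upwards [ae_orthant] with t ht
              calc (‖Kfun ι (Fin.cons 1 fun j => t j ^ q⁻¹) a /
                    ∏ j, φ j (t j) ^ q⁻¹‖₊ : ℝ≥0∞) ^ (r * q)
                  = ((‖Kfun ι (Fin.cons 1 fun j => t j ^ q⁻¹) a /
                    ∏ j, φ j (t j) ^ q⁻¹‖₊ : ℝ≥0∞) ^ q) ^ r := by
                    rw [← ENNReal.rpow_mul, mul_comm q r]
                _ ≤ (ENNReal.ofReal (mR ^ q) * (‖g₁ t‖₊ : ℝ≥0∞)) ^ r :=
                    ENNReal.rpow_le_rpow (point_ge_t ι hφpos hq a ht) hr.le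
          _ = (c⁻¹) ^ n * (ENNReal.ofReal (mR ^ q) ^ r * I) := by
              congr 1
              rw [hI, ← lintegral_const_mul' _ _
                (ENNReal.rpow_ne_top_of_nonneg hr.le ENNReal.ofReal_ne_top)]
              congr 1
              funext t
              rw [ENNReal.mul_rpow_of_nonneg _ _ hr.le]
      calc (Knorm ι (fun j t => φ j (t ^ q) ^ q⁻¹) (p * ENNReal.ofReal q) a) ^ q
          = J ^ (1 / r) := hKq
        _ ≤ ((c⁻¹) ^ n * (ENNReal.ofReal (mR ^ q) ^ r * I)) ^ (1 / r) :=
            ENNReal.rpow_le_rpow claimB (by positivity)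
        _ = C₂ * I ^ (1 / r) := by
            rw [ENNReal.mul_rpow_of_nonneg _ _ (by positivity : (0:ℝ) ≤ 1 / r),
              ENNReal.mul_rpow_of_nonneg _ _ (by positivity : (0:ℝ) ≤ 1 / r),
              ← ENNReal.rpow_mul (ENNReal.ofReal (mR ^ q)), hC₂]
            rw [mul_one_div, div_self hr.ne', ENNReal.rpow_one, mul_assoc]
        _ ≤ (C₁ + C₂ + 1) * I ^ (1 / r) := by
            apply mul_le_mul_left
            exact (le_add_self.trans_eq rfl).trans le_self_add
        _ = (C₁ + C₂ + 1) * KnormPow ι q φ p a := by rw [hKP]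
end
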